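/- arXiv:2501.02289 — 14 statements merged into one kernel-verified Lean document; each statement's English description precedes it below -/
import Mathlib

section
/- Let n ≥ 2 be an integer and d ∈ [0,1). Then ∫₀^π sin^{n−2}(θ)·R_d(θ)ⁿ dθ = ∫₀^π sin^{n−2}(θ) dθ, where R_d(θ) = d·cos θ + √(1 − d²·sin² θ). (Equivalently, with a ∈ (0,1) fixed, W₁ⁿ(d) := ∫₀^π sin^{n−2}(θ)·(R_d(θ)ⁿ − aⁿ) dθ satisfies W₁ⁿ(d) = W₁ⁿ(0).) -/
open Real

namespace Stmt3Aux

open Set intervalIntegral MeasureTheory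

noncomputable def Rr (d α : ℝ) : ℝ := Real.sqrt (1 + 2*d*Real.cos α + d^2)
noncomputable def cc (d α : ℝ) : ℝ := (Real.cos α + d) / Rr d α
noncomputable def ff (d α : ℝ) : ℝ := Real.arccos (cc d α)
noncomputable def gg (n : ℕ) (d θ : ℝ) : ℝ :=
  Real.sin θ ^ (n - 2) * (d * Real.cos θ + Real.sqrt (1 - d ^ 2 * Real.sin θ ^ 2)) ^ n

variable {d : ℝ}

lemma Q_pos (hd0 : 0 ≤ d) (hd1 : d < 1) (α : ℝ) : 0 < 1 + 2*d*Real.cos α + d^2 := by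
  nlinarith [Real.neg_one_le_cos α, Real.cos_le_one α, sq_nonneg (1 - d)]

lemma P_pos (hd0 : 0 ≤ d) (hd1 : d < 1) (α : ℝ) : 0 < 1 + d * Real.cos α := by
  nlinarith [Real.neg_one_le_cos α, Real.cos_le_one α]

lemma R_pos (hd0 : 0 ≤ d) (hd1 : d < 1) (α : ℝ) : 0 < Rr d α :=
  Real.sqrt_pos.2 (Q_pos hd0 hd1 α)

lemma R_sq (hd0 : 0 ≤ d) (hd1 : d < 1) (α : ℝ) :
    Rr d α ^ 2 = 1 + 2*d*Real.cos α + d^2 :=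
  Real.sq_sqrt (Q_pos hd0 hd1 α).le

lemma abs_cc_le (hd0 : 0 ≤ d) (hd1 : d < 1) (α : ℝ) : |cc d α| ≤ 1 := by
  have hR := R_pos hd0 hd1 α
  rw [cc, abs_div, abs_of_pos hR, div_le_one hR]
  have h1 : (Real.cos α + d)^2 ≤ 1 + 2*d*Real.cos α + d^2 := by
    nlinarith [Real.sin_sq_add_cos_sq α, sq_nonneg (Real.sin α)]
  calc |Real.cos α + d| ≤ Real.sqrt (1 + 2*d*Real.cos α + d^2) := Real.abs_le_sqrt h1
    _ = Rr d α := rfl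

lemma cos_ff (hd0 : 0 ≤ d) (hd1 : d < 1) (α : ℝ) : Real.cos (ff d α) = cc d α :=
  Real.cos_arccos (abs_le.1 (abs_cc_le hd0 hd1 α)).1 (abs_le.1 (abs_cc_le hd0 hd1 α)).2

lemma one_sub_cc_sq (hd0 : 0 ≤ d) (hd1 : d < 1) (α : ℝ) :
    1 - cc d α ^ 2 = (Real.sin α / Rr d α) ^ 2 := by
  have hR := (R_pos hd0 hd1 α).ne'
  have hR2 := R_sq hd0 hd1 α
  rw [cc]
  field_simp
  nlinarith [Real.sin_sq_add_cos_sq α]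

lemma sin_ff (hd0 : 0 ≤ d) (hd1 : d < 1) {α : ℝ} (hα : α ∈ Icc (0:ℝ) π) :
    Real.sin (ff d α) = Real.sin α / Rr d α := by
  rw [ff, Real.sin_arccos, one_sub_cc_sq hd0 hd1 α]
  exact Real.sqrt_sq (div_nonneg (Real.sin_nonneg_of_mem_Icc hα) (R_pos hd0 hd1 α).le)

lemma ff_zero (hd0 : 0 ≤ d) (hd1 : d < 1) : ff d 0 = 0 := by
  have h1 : Rr d 0 = 1 + d := by
    rw [Rr, Real.cos_zero]
    rw [show 1 + 2*d*1 + d^2 = (1+d)^2 by ring]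
    exact Real.sqrt_sq (by linarith)
  rw [ff, cc, h1, Real.cos_zero, div_self (by linarith : (1:ℝ) + d ≠ 0), Real.arccos_one]

lemma ff_pi (hd0 : 0 ≤ d) (hd1 : d < 1) : ff d π = π := by
  have h1 : Rr d π = 1 - d := by
    rw [Rr, Real.cos_pi]
    rw [show 1 + 2*d*(-1) + d^2 = (1-d)^2 by ring]
    exact Real.sqrt_sq (by linarith)
  have h2 : cc d π = -1 := by
    rw [cc, h1, Real.cos_pi, div_eq_iff (by linarith : (1:ℝ) - d ≠ 0)]
    ring
  rw [ff, h2, Real.arccos_neg_one]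

lemma cont_ff (hd0 : 0 ≤ d) (hd1 : d < 1) : Continuous (ff d) := by
  apply Real.continuous_arccos.comp
  apply Continuous.div (by continuity)
  · exact Real.continuous_sqrt.comp (by continuity)
  · exact fun α => (R_pos hd0 hd1 α).ne'

lemma cont_ff' (hd0 : 0 ≤ d) (hd1 : d < 1) :
    Continuous (fun α => (1 + d * Real.cos α) / (1 + 2*d*Real.cos α + d^2)) := by
  apply Continuous.div (by continuity) (by continuity)
  exact fun α => (Q_pos hd0 hd1 α).ne'

lemma hasDerivAt_ff (hd0 : 0 ≤ d) (hd1 : d < 1) {α : ℝ} (hα : α ∈ Ioo (0:ℝ) π) :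
    HasDerivAt (ff d) ((1 + d * Real.cos α) / (1 + 2*d*Real.cos α + d^2)) α := by
  have hQ := Q_pos hd0 hd1 α
  have hR := R_pos hd0 hd1 α
  have hR2 := R_sq hd0 hd1 α
  have hsin : 0 < Real.sin α := Real.sin_pos_of_pos_of_lt_pi hα.1 hα.2
  -- derivative of inner rational function
  have hRder : HasDerivAt (fun x => Rr d x)
      ((2*d*(-Real.sin α)) / (2 * Rr d α)) α := by
    have hinner : HasDerivAt (fun x => 1 + 2*d*Real.cos x + d^2) (2*d*(-Real.sin α)) α := by
      simpa using (((Real.hasDerivAt_cos α).const_mul (2*d)).const_add 1).add_const (d^2)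
    exact hinner.sqrt hQ.ne'
  have hcder : HasDerivAt (fun x => cc d x)
      (((-Real.sin α) * Rr d α - (Real.cos α + d) * ((2*d*(-Real.sin α)) / (2 * Rr d α)))
        / Rr d α ^ 2) α :=
    ((Real.hasDerivAt_cos α).add_const d).div hRder hR.ne'
  have hlt : cc d α ^ 2 < 1 := by
    rw [show (1:ℝ) = 1 - 0 by ring]
    rw [show cc d α ^2 = 1 - (1 - cc d α^2) by ring, one_sub_cc_sq hd0 hd1 α]
    have : 0 < (Real.sin α / Rr d α)^2 := pow_pos (div_pos hsin hR) 2
    linarith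
  have hne1 : cc d α ≠ -1 := by intro h; rw [h] at hlt; norm_num at hlt
  have hne2 : cc d α ≠ 1 := by intro h; rw [h] at hlt; norm_num at hlt
  have harc := (Real.hasDerivAt_arccos hne1 hne2).comp α hcder
  have hs : Real.sqrt (1 - cc d α ^ 2) = Real.sin α / Rr d α := by
    rw [one_sub_cc_sq hd0 hd1 α]
    exact Real.sqrt_sq (div_nonneg hsin.le hR.le)
  refine HasDerivAt.congr_deriv harc (Eq.symm ?_)
  rw [hs]
  rw [show 1 + 2*d*Real.cos α + d^2 = Rr d α ^ 2 from hR2.symm]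
  field_simp
  linear_combination (-1) * hR2

lemma cont_gg (n : ℕ) (d : ℝ) : Continuous (gg n d) := by
  apply Continuous.mul (by continuity)
  exact (((continuous_const.mul continuous_cos).add
    (Real.continuous_sqrt.comp (by continuity))).pow n)

lemma pointwise (n : ℕ) (hn : 2 ≤ n) (hd0 : 0 ≤ d) (hd1 : d < 1) {α : ℝ}
    (hα : α ∈ Icc (0:ℝ) π) :
    ((1 + d * Real.cos α) / (1 + 2*d*Real.cos α + d^2)) • gg n d (ff d α)
      = Real.sin α ^ (n - 2) * (1 + d * Real.cos α) := by
  have hQ := Q_pos hd0 hd1 α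
  have hR := R_pos hd0 hd1 α
  have hR2 := R_sq hd0 hd1 α
  have hP := P_pos hd0 hd1 α
  rw [smul_eq_mul, gg, sin_ff hd0 hd1 hα, cos_ff hd0 hd1 α]
  have hs : Real.sqrt (1 - d^2 * (Real.sin α / Rr d α)^2)
      = (1 + d*Real.cos α) / Rr d α := by
    rw [show 1 - d^2 * (Real.sin α / Rr d α)^2 = ((1 + d*Real.cos α) / Rr d α)^2 by
      field_simp
      nlinarith [Real.sin_sq_add_cos_sq α]]
    exact Real.sqrt_sq (div_nonneg hP.le hR.le)
  rw [hs, cc]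
  have h2 : d * ((Real.cos α + d) / Rr d α) + (1 + d*Real.cos α) / Rr d α = Rr d α := by
    field_simp
    nlinarith [hR2]
  rw [h2]
  have hpow : Rr d α ^ n = Rr d α ^ (n-2) * Rr d α ^ 2 := by
    rw [← pow_add, Nat.sub_add_cancel hn]
  rw [div_pow, hpow, show 1 + 2*d*Real.cos α + d^2 = Rr d α ^ 2 from hR2.symm]
  have hRn : Rr d α ^ (n-2) ≠ 0 := pow_ne_zero _ hR.ne'
  have hRsq : Rr d α ^ 2 ≠ 0 := pow_ne_zero _ hR.ne'
  field_simp

lemma int_sin_pow_cos (n : ℕ) (hn : 2 ≤ n) :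
    (∫ α in (0:ℝ)..π, Real.sin α ^ (n-2) * Real.cos α) = 0 := by
  have hder : ∀ x ∈ Set.uIcc (0:ℝ) π,
      HasDerivAt (fun x => Real.sin x ^ (n-1))
        (((n-1:ℕ):ℝ) * Real.sin x ^ (n-2) * Real.cos x) x := by
    intro x _
    have := (Real.hasDerivAt_sin x).pow (n-1)
    exact this.congr_deriv (by rw [show n - 1 - 1 = n - 2 by omega])
  have hint : IntervalIntegrable
      (fun x => ((n-1:ℕ):ℝ) * Real.sin x ^ (n-2) * Real.cos x) volume 0 π :=
    (by continuity : Continuous fun x => ((n-1:ℕ):ℝ) * Real.sin x ^ (n-2) * Real.cos x).intervalIntegrable _ _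
  have key := intervalIntegral.integral_eq_sub_of_hasDerivAt hder hint
  have hz : Real.sin π ^ (n-1) - Real.sin 0 ^ (n-1) = 0 := by
    rw [Real.sin_pi, Real.sin_zero, zero_pow (by omega : n - 1 ≠ 0)]
    ring
  rw [hz] at key
  have hmul : (∫ α in (0:ℝ)..π, ((n-1:ℕ):ℝ) * Real.sin α ^ (n-2) * Real.cos α)
      = ((n-1:ℕ):ℝ) * ∫ α in (0:ℝ)..π, Real.sin α ^ (n-2) * Real.cos α := by
    rw [← intervalIntegral.integral_const_mul]
    congr 1; ext x; ring
  rw [hmul] at key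
  have hne : ((n-1:ℕ):ℝ) ≠ 0 := by
    simp only [ne_eq, Nat.cast_eq_zero]
    omega
  exact (mul_eq_zero.1 key).resolve_left hne

lemma key_identity (n : ℕ) (hn : 2 ≤ n) (hd0 : 0 ≤ d) (hd1 : d < 1) :
    (∫ θ in (0:ℝ)..π, Real.sin θ ^ (n - 2) *
        (d * Real.cos θ + Real.sqrt (1 - d ^ 2 * Real.sin θ ^ 2)) ^ n)
      = ∫ θ in (0:ℝ)..π, Real.sin θ ^ (n - 2) := by
  have hsub := intervalIntegral.integral_comp_smul_deriv''
    (f := ff d) (f' := fun α => (1 + d * Real.cos α) / (1 + 2*d*Real.cos α + d^2))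
    (g := gg n d) (a := (0:ℝ)) (b := π)
    ((cont_ff hd0 hd1).continuousOn)
    (fun x hx => by
      rw [min_eq_left Real.pi_pos.le, max_eq_right Real.pi_pos.le] at hx
      exact (hasDerivAt_ff hd0 hd1 hx).hasDerivWithinAt)
    ((cont_ff' hd0 hd1).continuousOn)
    ((cont_gg n d).continuousOn)
  rw [ff_zero hd0 hd1, ff_pi hd0 hd1] at hsub
  have hL : (∫ x in (0:ℝ)..π,
      ((1 + d * Real.cos x) / (1 + 2*d*Real.cos x + d^2)) • (gg n d ∘ ff d) x)
      = ∫ α in (0:ℝ)..π, Real.sin α ^ (n - 2) * (1 + d * Real.cos α) := by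
    apply intervalIntegral.integral_congr
    intro α hα
    rw [Set.uIcc_of_le Real.pi_pos.le] at hα
    exact pointwise n hn hd0 hd1 hα
  have hR3 : (∫ α in (0:ℝ)..π, Real.sin α ^ (n - 2) * (1 + d * Real.cos α))
      = ∫ θ in (0:ℝ)..π, Real.sin θ ^ (n - 2) := by
    have h1 : IntervalIntegrable (fun α => Real.sin α ^ (n-2)) volume 0 π :=
      (by continuity : Continuous fun α => Real.sin α ^ (n-2)).intervalIntegrable _ _
    have h2 : IntervalIntegrable (fun α => d * (Real.sin α ^ (n-2) * Real.cos α)) volume 0 π :=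
      (by continuity : Continuous fun α => d * (Real.sin α ^ (n-2) * Real.cos α)).intervalIntegrable _ _
    calc (∫ α in (0:ℝ)..π, Real.sin α ^ (n - 2) * (1 + d * Real.cos α))
        = ∫ α in (0:ℝ)..π, (Real.sin α ^ (n-2)
            + d * (Real.sin α ^ (n-2) * Real.cos α)) := by
          congr 1; ext α; ring
      _ = (∫ α in (0:ℝ)..π, Real.sin α ^ (n-2))
            + ∫ α in (0:ℝ)..π, d * (Real.sin α ^ (n-2) * Real.cos α) :=
          intervalIntegral.integral_add h1 h2
      _ = (∫ α in (0:ℝ)..π, Real.sin α ^ (n-2)) + d * 0 := by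
          rw [intervalIntegral.integral_const_mul, int_sin_pow_cos n hn]
      _ = ∫ α in (0:ℝ)..π, Real.sin α ^ (n-2) := by ring
  calc (∫ θ in (0:ℝ)..π, Real.sin θ ^ (n - 2) *
        (d * Real.cos θ + Real.sqrt (1 - d ^ 2 * Real.sin θ ^ 2)) ^ n)
      = ∫ θ in (0:ℝ)..π, gg n d θ := rfl
    _ = ∫ x in (0:ℝ)..π,
          ((1 + d * Real.cos x) / (1 + 2*d*Real.cos x + d^2)) • (gg n d ∘ ff d) x := hsub.symm
    _ = ∫ α in (0:ℝ)..π, Real.sin α ^ (n - 2) * (1 + d * Real.cos α) := hL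
    _ = ∫ θ in (0:ℝ)..π, Real.sin θ ^ (n - 2) := hR3

end Stmt3Aux

/-- For `n ≥ 2` and `d ∈ [0,1)`,
`∫₀^π sin^{n−2}(θ)·R_d(θ)ⁿ dθ = ∫₀^π sin^{n−2}(θ) dθ`, where
`R_d(θ) = d·cos θ + √(1 − d²·sin² θ)`; equivalently, for `a ∈ (0,1)`,
`W₁ⁿ(d) = ∫₀^π sin^{n−2}(θ)·(R_d(θ)ⁿ − aⁿ) dθ` satisfies `W₁ⁿ(d) = W₁ⁿ(0)`. -/
theorem stmt_3 (n : ℕ) (hn : 2 ≤ n) (d : ℝ) (hd : d ∈ Set.Ico (0:ℝ) 1)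
    (a : ℝ) (ha : a ∈ Set.Ioo (0:ℝ) 1) :
    (∫ θ in (0:ℝ)..π, Real.sin θ ^ (n - 2) *
        (d * Real.cos θ + Real.sqrt (1 - d ^ 2 * Real.sin θ ^ 2)) ^ n)
      = ∫ θ in (0:ℝ)..π, Real.sin θ ^ (n - 2) ∧
    (∫ θ in (0:ℝ)..π, Real.sin θ ^ (n - 2) *
        ((d * Real.cos θ + Real.sqrt (1 - d ^ 2 * Real.sin θ ^ 2)) ^ n - a ^ n))
      = ∫ θ in (0:ℝ)..π, Real.sin θ ^ (n - 2) *
        ((0 * Real.cos θ + Real.sqrt (1 - 0 ^ 2 * Real.sin θ ^ 2)) ^ n - a ^ n) := by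
  obtain ⟨hd0, hd1⟩ := hd
  have hkey := Stmt3Aux.key_identity n hn hd0 hd1
  refine ⟨hkey, ?_⟩
  have hkey0 := Stmt3Aux.key_identity n hn (le_refl (0:ℝ)) one_pos
  have hsplit : ∀ e : ℝ, 0 ≤ e → e < 1 →
      (∫ θ in (0:ℝ)..π, Real.sin θ ^ (n - 2) *
        ((e * Real.cos θ + Real.sqrt (1 - e ^ 2 * Real.sin θ ^ 2)) ^ n - a ^ n))
      = (∫ θ in (0:ℝ)..π, Real.sin θ ^ (n - 2) *
          (e * Real.cos θ + Real.sqrt (1 - e ^ 2 * Real.sin θ ^ 2)) ^ n)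
        - a ^ n * ∫ θ in (0:ℝ)..π, Real.sin θ ^ (n - 2) := by
    intro e he0 he1
    have h1 : IntervalIntegrable (Stmt3Aux.gg n e) MeasureTheory.volume 0 π :=
      (Stmt3Aux.cont_gg n e).intervalIntegrable _ _
    have h2 : IntervalIntegrable
        (fun θ => a ^ n * Real.sin θ ^ (n-2)) MeasureTheory.volume 0 π :=
      (by continuity : Continuous fun θ => a ^ n * Real.sin θ ^ (n-2)).intervalIntegrable _ _
    calc (∫ θ in (0:ℝ)..π, Real.sin θ ^ (n - 2) *
        ((e * Real.cos θ + Real.sqrt (1 - e ^ 2 * Real.sin θ ^ 2)) ^ n - a ^ n))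
        = ∫ θ in (0:ℝ)..π, (Stmt3Aux.gg n e θ - a ^ n * Real.sin θ ^ (n-2)) := by
          congr 1; ext θ; rw [Stmt3Aux.gg]; ring
      _ = (∫ θ in (0:ℝ)..π, Stmt3Aux.gg n e θ)
            - ∫ θ in (0:ℝ)..π, a ^ n * Real.sin θ ^ (n-2) :=
          intervalIntegral.integral_sub h1 h2
      _ = (∫ θ in (0:ℝ)..π, Real.sin θ ^ (n - 2) *
            (e * Real.cos θ + Real.sqrt (1 - e ^ 2 * Real.sin θ ^ 2)) ^ n)
          - a ^ n * ∫ θ in (0:ℝ)..π, Real.sin θ ^ (n-2) := by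
          rw [intervalIntegral.integral_const_mul]; rfl
  rw [hsplit d hd0 hd1, hsplit 0 (le_refl 0) one_pos, hkey, hkey0]
end

section
/- Let n ≥ 2 be an integer, a ∈ (0,1) and d ∈ [0,1). Define φ_n(θ) = −n·sinⁿ(θ) + (n−1)·sin^{n−2}(θ) and R_d(θ) = d·cos θ + √(1 − d²·sin² θ). Then W₂ⁿ(d) := ∫₀^π φ_n(θ)·ln(R_d(θ)/a) dθ = 0. -/
open Real

/-- For `n ≥ 2`, `a ∈ (0,1)`, `d ∈ [0,1)`, with
`φ_n(θ) = −n·sinⁿθ + (n−1)·sin^{n−2}θ` and `R_d(θ) = d·cos θ + √(1 − d²·sin² θ)`,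
one has `W₂ⁿ(d) = ∫₀^π φ_n(θ)·ln(R_d(θ)/a) dθ = 0`. -/
theorem stmt_4 (n : ℕ) (hn : 2 ≤ n) (a : ℝ) (ha : a ∈ Set.Ioo (0:ℝ) 1)
    (d : ℝ) (hd : d ∈ Set.Ico (0:ℝ) 1) :
    (∫ θ in (0:ℝ)..π,
        (-(n : ℝ) * Real.sin θ ^ n + ((n : ℝ) - 1) * Real.sin θ ^ (n - 2)) *
          Real.log ((d * Real.cos θ + Real.sqrt (1 - d ^ 2 * Real.sin θ ^ 2)) / a))
      = 0 := by
  obtain ⟨ha0, ha1⟩ := ha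
  obtain ⟨hd0, hd1⟩ := hd
  obtain ⟨m, rfl⟩ : ∃ m, n = m + 2 := ⟨n - 2, by omega⟩
  have hd2 : d ^ 2 < 1 := by nlinarith
  have hS : ∀ θ : ℝ, 0 ≤ 1 - d ^ 2 * Real.sin θ ^ 2 := by
    intro θ
    nlinarith [Real.sin_sq_le_one θ, sq_nonneg (Real.sin θ), sq_nonneg d,
      sq_nonneg (d * Real.sin θ)]
  have hR : ∀ θ : ℝ, 0 < d * Real.cos θ + Real.sqrt (1 - d ^ 2 * Real.sin θ ^ 2) := by
    intro θ
    have h2 : |d * Real.cos θ| < Real.sqrt (1 - d ^ 2 * Real.sin θ ^ 2) := by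
      rw [← Real.sqrt_sq_eq_abs]
      apply Real.sqrt_lt_sqrt (by positivity)
      nlinarith [Real.sin_sq_add_cos_sq θ]
    have := neg_abs_le (d * Real.cos θ)
    linarith
  set φ : ℝ → ℝ := fun θ => -((m:ℝ) + 2) * Real.sin θ ^ (m + 2) +
      (((m:ℝ) + 2) - 1) * Real.sin θ ^ m with hφ
  set f : ℝ → ℝ := fun θ => φ θ *
      Real.log ((d * Real.cos θ + Real.sqrt (1 - d ^ 2 * Real.sin θ ^ 2)) / a) with hf
  -- the goal is ∫ f = 0
  have hgoal : (∫ θ in (0:ℝ)..π,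
        (-((m+2 : ℕ) : ℝ) * Real.sin θ ^ (m+2) + (((m+2:ℕ) : ℝ) - 1) * Real.sin θ ^ (m+2-2)) *
          Real.log ((d * Real.cos θ + Real.sqrt (1 - d ^ 2 * Real.sin θ ^ 2)) / a))
      = ∫ θ in (0:ℝ)..π, f θ := by
    apply intervalIntegral.integral_congr
    intro θ _
    simp only [hf, hφ, Nat.add_sub_cancel]
    push_cast
    ring
  rw [hgoal]
  -- integrability / continuity facts
  have hφcont : Continuous φ := by
    apply Continuous.add <;> exact continuous_const.mul (Real.continuous_sin.pow _)
  have hRcont : Continuous fun θ : ℝ =>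
      (d * Real.cos θ + Real.sqrt (1 - d ^ 2 * Real.sin θ ^ 2)) / a := by
    apply Continuous.div_const
    exact (continuous_const.mul Real.continuous_cos).add
      (Real.continuous_sqrt.comp (by continuity))
  have hfcont : Continuous f :=
    hφcont.mul (hRcont.log (fun θ => ne_of_gt (div_pos (hR θ) ha0)))
  have hfint : IntervalIntegrable f MeasureTheory.volume 0 π :=
    hfcont.intervalIntegrable 0 π
  have hfint2 : IntervalIntegrable (fun θ => f (π - θ)) MeasureTheory.volume 0 π :=
    (hfcont.comp (continuous_const.sub continuous_id)).intervalIntegrable 0 π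
  -- Wallis: ∫ φ = 0
  have hI : ∀ p : ℕ, IntervalIntegrable (fun θ => Real.sin θ ^ p) MeasureTheory.volume 0 π :=
    fun p => (Real.continuous_sin.pow p).intervalIntegrable 0 π
  have hφ0 : (∫ θ in (0:ℝ)..π, φ θ) = 0 := by
    have h := @integral_sin_pow 0 π m
    simp only [Real.sin_zero, Real.sin_pi, Real.cos_zero, Real.cos_pi, zero_pow,
      Nat.succ_ne_zero, ne_eq, not_false_iff, zero_mul, mul_one, sub_zero, zero_sub,
      neg_zero, zero_div, zero_add, Nat.add_eq_zero, and_false] at h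
    simp only [hφ]
    rw [intervalIntegral.integral_add ((hI (m+2)).const_mul _) ((hI m).const_mul _),
        intervalIntegral.integral_const_mul, intervalIntegral.integral_const_mul, h]
    have hm : (m:ℝ) + 2 ≠ 0 := by positivity
    field_simp
    ring
  -- reflection
  have hrefl : (∫ θ in (0:ℝ)..π, f (π - θ)) = ∫ θ in (0:ℝ)..π, f θ := by
    rw [intervalIntegral.integral_comp_sub_left f π]
    norm_num
  have key : ∀ θ : ℝ, f θ + f (π - θ) = φ θ * Real.log ((1 - d ^ 2) / a ^ 2) := by
    intro θ
    have hsin : Real.sin (π - θ) = Real.sin θ := Real.sin_pi_sub θ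
    have hcos : Real.cos (π - θ) = -Real.cos θ := Real.cos_pi_sub θ
    have hφsym : φ (π - θ) = φ θ := by simp [hφ, hsin]
    have hX : (0:ℝ) < (d * Real.cos θ + Real.sqrt (1 - d ^ 2 * Real.sin θ ^ 2)) / a :=
      div_pos (hR θ) ha0
    have hY : (0:ℝ) <
        (d * Real.cos (π - θ) + Real.sqrt (1 - d ^ 2 * Real.sin (π - θ) ^ 2)) / a :=
      div_pos (hR (π - θ)) ha0
    have hprod : ((d * Real.cos θ + Real.sqrt (1 - d ^ 2 * Real.sin θ ^ 2)) / a) *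
        ((d * Real.cos (π - θ) + Real.sqrt (1 - d ^ 2 * Real.sin (π - θ) ^ 2)) / a)
        = (1 - d ^ 2) / a ^ 2 := by
      rw [hsin, hcos]
      have hsq : Real.sqrt (1 - d ^ 2 * Real.sin θ ^ 2) ^ 2
          = 1 - d ^ 2 * Real.sin θ ^ 2 := Real.sq_sqrt (hS θ)
      have hpc : Real.sin θ ^ 2 + Real.cos θ ^ 2 = 1 := Real.sin_sq_add_cos_sq θ
      field_simp
      linear_combination hsq - d ^ 2 * hpc
    simp only [hf, hφsym]
    rw [← mul_add, ← Real.log_mul (ne_of_gt hX) (ne_of_gt hY), hprod]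
  have h2 : (2:ℝ) * (∫ θ in (0:ℝ)..π, f θ) = 0 := by
    have hsum : (∫ θ in (0:ℝ)..π, f θ) + (∫ θ in (0:ℝ)..π, f (π - θ))
        = ∫ θ in (0:ℝ)..π, (f θ + f (π - θ)) :=
      (intervalIntegral.integral_add hfint hfint2).symm
    have hconst : (∫ θ in (0:ℝ)..π, (f θ + f (π - θ)))
        = ∫ θ in (0:ℝ)..π, φ θ * Real.log ((1 - d ^ 2) / a ^ 2) := by
      apply intervalIntegral.integral_congr
      intro θ _
      exact key θ
    rw [two_mul]
    nth_rewrite 2 [← hrefl]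
    rw [hsum, hconst, intervalIntegral.integral_mul_const, hφ0, zero_mul]
  linarith
end

section
/- Let n ≥ 2 be an integer, a ∈ (0,1) and d ∈ [0,1−a]. Define ψ_n(θ) = n(n−2)·sinⁿ(θ) + (n−1)·sin^{n−2}(θ) ≥ 0 and R_d(θ) = d·cos θ + √(1 − d²·sin² θ). Then W₃ⁿ(d) := ∫₀^π ψ_n(θ)·(R_d(θ)^{−n} − a^{−n}) dθ satisfies W₃ⁿ(d) ≥ W₃ⁿ(0), with equality if and only if d = 0. -/
open Real

noncomputable def psiF (n : ℕ) (θ : ℝ) : ℝ :=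
  (n : ℝ) * ((n : ℝ) - 2) * Real.sin θ ^ n + ((n : ℝ) - 1) * Real.sin θ ^ (n - 2)

noncomputable def RF (d θ : ℝ) : ℝ :=
  d * Real.cos θ + Real.sqrt (1 - d ^ 2 * Real.sin θ ^ 2)

lemma psiF_cont (n : ℕ) : Continuous (psiF n) := by
  unfold psiF; continuity

lemma RF_cont (d : ℝ) : Continuous (RF d) := by
  unfold RF
  exact (continuous_const.mul Real.continuous_cos).add
    (Real.continuous_sqrt.comp (by continuity))

lemma psiF_nonneg (n : ℕ) (hn : 2 ≤ n) {θ : ℝ} (h0 : 0 ≤ Real.sin θ) : 0 ≤ psiF n θ := by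
  have h2 : (2:ℝ) ≤ (n:ℝ) := by exact_mod_cast hn
  unfold psiF
  have hn0 : (0:ℝ) ≤ (n:ℝ) := by linarith
  exact add_nonneg (mul_nonneg (mul_nonneg hn0 (by linarith)) (pow_nonneg h0 n))
    (mul_nonneg (by linarith) (pow_nonneg h0 (n - 2)))

lemma psiF_pos (n : ℕ) (hn : 2 ≤ n) {θ : ℝ} (h0 : 0 < Real.sin θ) : 0 < psiF n θ := by
  have h2 : (2:ℝ) ≤ (n:ℝ) := by exact_mod_cast hn
  unfold psiF
  have hn0 : (0:ℝ) ≤ (n:ℝ) := by linarith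
  have h1 : 0 ≤ (n:ℝ) * ((n:ℝ) - 2) * Real.sin θ ^ n :=
    mul_nonneg (mul_nonneg hn0 (by linarith)) (pow_nonneg h0.le n)
  have h3 : 0 < ((n:ℝ) - 1) * Real.sin θ ^ (n - 2) :=
    mul_pos (by linarith) (pow_pos h0 (n - 2))
  linarith

lemma psiF_pi_sub (n : ℕ) (θ : ℝ) : psiF n (π - θ) = psiF n θ := by
  simp [psiF, Real.sin_pi_sub]

lemma rad_nonneg {d : ℝ} (hd0 : 0 ≤ d) (hd1 : d < 1) (θ : ℝ) :
    0 ≤ 1 - d ^ 2 * Real.sin θ ^ 2 := by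
  nlinarith [Real.sin_sq_le_one θ, sq_nonneg (Real.sin θ)]

lemma RF_pos {d : ℝ} (hd0 : 0 ≤ d) (hd1 : d < 1) (θ : ℝ) : 0 < RF d θ := by
  have h1 := rad_nonneg hd0 hd1 θ
  have hs0 : 0 ≤ Real.sqrt (1 - d ^ 2 * Real.sin θ ^ 2) := Real.sqrt_nonneg _
  have hs2 : Real.sqrt (1 - d ^ 2 * Real.sin θ ^ 2) ^ 2 = 1 - d ^ 2 * Real.sin θ ^ 2 :=
    Real.sq_sqrt h1
  have hpyth := Real.sin_sq_add_cos_sq θ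
  unfold RF
  nlinarith [sq_nonneg (Real.cos θ), sq_nonneg (Real.sin θ)]

lemma RF_prod {d : ℝ} (hd0 : 0 ≤ d) (hd1 : d < 1) (θ : ℝ) :
    RF d θ * RF d (π - θ) = 1 - d ^ 2 := by
  have h1 := rad_nonneg hd0 hd1 θ
  have hs2 : Real.sqrt (1 - d ^ 2 * Real.sin θ ^ 2) ^ 2 = 1 - d ^ 2 * Real.sin θ ^ 2 :=
    Real.sq_sqrt h1
  unfold RF
  rw [Real.cos_pi_sub, Real.sin_pi_sub]
  linear_combination hs2 - d ^ 2 * Real.sin_sq_add_cos_sq θ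

lemma RF_zero (θ : ℝ) : RF 0 θ = 1 := by simp [RF]

lemma aux_key {x y : ℝ} (hx : 0 < x) (hy : 0 < y) (h : x * y ≤ 1) : 2 ≤ 1 / x + 1 / y := by
  set u := Real.sqrt (x * y) with hu
  have hu2 : u ^ 2 = x * y := Real.sq_sqrt (by positivity)
  have hu0 : 0 ≤ u := Real.sqrt_nonneg _
  have hu1 : u ≤ 1 := by nlinarith
  have hxyu : x * y ≤ u := by nlinarith
  have hsum : 2 * u ≤ x + y := by
    have h1 : Real.sqrt (x * y) = Real.sqrt x * Real.sqrt y := Real.sqrt_mul hx.le y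
    nlinarith [sq_nonneg (Real.sqrt x - Real.sqrt y), Real.sq_sqrt hx.le, Real.sq_sqrt hy.le]
  rw [div_add_div _ _ hx.ne' hy.ne', le_div_iff₀ (by positivity)]
  nlinarith

lemma aux_key_strict {x y : ℝ} (hx : 0 < x) (hy : 0 < y) (h : x * y < 1) :
    2 < 1 / x + 1 / y := by
  set u := Real.sqrt (x * y) with hu
  have hu2 : u ^ 2 = x * y := Real.sq_sqrt (by positivity)
  have hu0 : 0 < u := Real.sqrt_pos.mpr (by positivity)
  have hu1 : u < 1 := by nlinarith
  have hxyu : x * y < u := by nlinarith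
  have hsum : 2 * u ≤ x + y := by
    have h1 : Real.sqrt (x * y) = Real.sqrt x * Real.sqrt y := Real.sqrt_mul hx.le y
    nlinarith [sq_nonneg (Real.sqrt x - Real.sqrt y), Real.sq_sqrt hx.le, Real.sq_sqrt hy.le]
  rw [div_add_div _ _ hx.ne' hy.ne', lt_div_iff₀ (by positivity)]
  nlinarith

lemma pair_nonneg {n : ℕ} (hn : 2 ≤ n) {d : ℝ} (hd0 : 0 ≤ d) (hd1 : d < 1)
    {θ : ℝ} (hθ : θ ∈ Set.Icc (0:ℝ) π) :
    0 ≤ psiF n θ * (1 / RF d θ ^ n - 1) + psiF n (π - θ) * (1 / RF d (π - θ) ^ n - 1) := by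
  have hsin : 0 ≤ Real.sin θ := Real.sin_nonneg_of_nonneg_of_le_pi hθ.1 hθ.2
  have hx : 0 < RF d θ ^ n := pow_pos (RF_pos hd0 hd1 θ) n
  have hy : 0 < RF d (π - θ) ^ n := pow_pos (RF_pos hd0 hd1 (π - θ)) n
  have hxy : RF d θ ^ n * RF d (π - θ) ^ n ≤ 1 := by
    rw [← mul_pow, RF_prod hd0 hd1]
    exact pow_le_one₀ (by nlinarith) (by nlinarith)
  have hkey := aux_key hx hy hxy
  have heq : psiF n θ * (1 / RF d θ ^ n - 1) + psiF n (π - θ) * (1 / RF d (π - θ) ^ n - 1)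
      = psiF n θ * (1 / RF d θ ^ n + 1 / RF d (π - θ) ^ n - 2) := by
    rw [psiF_pi_sub]; ring
  rw [heq]
  exact mul_nonneg (psiF_nonneg n hn hsin) (by linarith)

lemma pair_pos {n : ℕ} (hn : 2 ≤ n) {d : ℝ} (hd0 : 0 < d) (hd1 : d < 1)
    {θ : ℝ} (hθ : θ ∈ Set.Ioo (0:ℝ) π) :
    0 < psiF n θ * (1 / RF d θ ^ n - 1) + psiF n (π - θ) * (1 / RF d (π - θ) ^ n - 1) := by
  have hsin : 0 < Real.sin θ := Real.sin_pos_of_pos_of_lt_pi hθ.1 hθ.2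
  have hx : 0 < RF d θ ^ n := pow_pos (RF_pos hd0.le hd1 θ) n
  have hy : 0 < RF d (π - θ) ^ n := pow_pos (RF_pos hd0.le hd1 (π - θ)) n
  have hxy : RF d θ ^ n * RF d (π - θ) ^ n < 1 := by
    rw [← mul_pow, RF_prod hd0.le hd1]
    exact pow_lt_one₀ (by nlinarith) (by nlinarith) (by omega)
  have hkey := aux_key_strict hx hy hxy
  have heq : psiF n θ * (1 / RF d θ ^ n - 1) + psiF n (π - θ) * (1 / RF d (π - θ) ^ n - 1)
      = psiF n θ * (1 / RF d θ ^ n + 1 / RF d (π - θ) ^ n - 2) := by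
    rw [psiF_pi_sub]; ring
  rw [heq]
  exact mul_pos (psiF_pos n hn hsin) (by linarith)

/-- For `n ≥ 2`, `a ∈ (0,1)` and `d ∈ [0,1−a]`, with
`ψ_n(θ) = n(n−2)·sinⁿθ + (n−1)·sin^{n−2}θ ≥ 0` and
`R_d(θ) = d·cos θ + √(1 − d²·sin² θ)`, the quantity
`W₃ⁿ(d) = ∫₀^π ψ_n(θ)·(R_d(θ)^{−n} − a^{−n}) dθ` satisfies `W₃ⁿ(d) ≥ W₃ⁿ(0)`,
with equality if and only if `d = 0`. -/
theorem stmt_5 (n : ℕ) (hn : 2 ≤ n) (a : ℝ) (ha : a ∈ Set.Ioo (0:ℝ) 1)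
    (d : ℝ) (hd : d ∈ Set.Icc (0:ℝ) (1 - a)) :
    (∀ θ ∈ Set.Icc (0:ℝ) π, 0 ≤ (n : ℝ) * ((n : ℝ) - 2) * Real.sin θ ^ n
        + ((n : ℝ) - 1) * Real.sin θ ^ (n - 2)) ∧
    (∫ θ in (0:ℝ)..π,
        ((n : ℝ) * ((n : ℝ) - 2) * Real.sin θ ^ n + ((n : ℝ) - 1) * Real.sin θ ^ (n - 2)) *
          (1 / (0 * Real.cos θ + Real.sqrt (1 - 0 ^ 2 * Real.sin θ ^ 2)) ^ n - 1 / a ^ n))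
      ≤ (∫ θ in (0:ℝ)..π,
        ((n : ℝ) * ((n : ℝ) - 2) * Real.sin θ ^ n + ((n : ℝ) - 1) * Real.sin θ ^ (n - 2)) *
          (1 / (d * Real.cos θ + Real.sqrt (1 - d ^ 2 * Real.sin θ ^ 2)) ^ n - 1 / a ^ n)) ∧
    ((∫ θ in (0:ℝ)..π,
        ((n : ℝ) * ((n : ℝ) - 2) * Real.sin θ ^ n + ((n : ℝ) - 1) * Real.sin θ ^ (n - 2)) *
          (1 / (d * Real.cos θ + Real.sqrt (1 - d ^ 2 * Real.sin θ ^ 2)) ^ n - 1 / a ^ n))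
      = (∫ θ in (0:ℝ)..π,
        ((n : ℝ) * ((n : ℝ) - 2) * Real.sin θ ^ n + ((n : ℝ) - 1) * Real.sin θ ^ (n - 2)) *
          (1 / (0 * Real.cos θ + Real.sqrt (1 - 0 ^ 2 * Real.sin θ ^ 2)) ^ n - 1 / a ^ n))
      ↔ d = 0) := by
  obtain ⟨ha0, ha1⟩ := ha
  obtain ⟨hd0, hdle⟩ := hd
  have hd1 : d < 1 := by linarith
  -- reformulate via psiF and RF
  show (∀ θ ∈ Set.Icc (0:ℝ) π, 0 ≤ psiF n θ) ∧
    (∫ θ in (0:ℝ)..π, psiF n θ * (1 / RF 0 θ ^ n - 1 / a ^ n))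
      ≤ (∫ θ in (0:ℝ)..π, psiF n θ * (1 / RF d θ ^ n - 1 / a ^ n)) ∧
    ((∫ θ in (0:ℝ)..π, psiF n θ * (1 / RF d θ ^ n - 1 / a ^ n))
      = (∫ θ in (0:ℝ)..π, psiF n θ * (1 / RF 0 θ ^ n - 1 / a ^ n)) ↔ d = 0)
  -- continuity and integrability
  have hC : ∀ d' : ℝ, (0 ≤ d') → (d' < 1) → ∀ c : ℝ,
      Continuous (fun θ => psiF n θ * (1 / RF d' θ ^ n - c)) := by
    intro d' h0 h1 c
    exact (psiF_cont n).mul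
      ((continuous_const.div ((RF_cont d').pow n)
        (fun θ => pow_ne_zero n (RF_pos h0 h1 θ).ne')).sub continuous_const)
  have hInt : ∀ d' : ℝ, (0 ≤ d') → (d' < 1) → ∀ c : ℝ,
      IntervalIntegrable (fun θ => psiF n θ * (1 / RF d' θ ^ n - c)) MeasureTheory.volume 0 π :=
    fun d' h0 h1 c => (hC d' h0 h1 c).intervalIntegrable 0 π
  have hGc : Continuous (fun θ => psiF n θ * (1 / RF d θ ^ n - 1)) := hC d hd0 hd1 1
  have hGint : IntervalIntegrable (fun θ => psiF n θ * (1 / RF d θ ^ n - 1))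
      MeasureTheory.volume 0 π := hInt d hd0 hd1 1
  have hGc' : Continuous (fun θ => psiF n (π - θ) * (1 / RF d (π - θ) ^ n - 1)) :=
    hGc.comp (continuous_const.sub continuous_id)
  have hGint' : IntervalIntegrable (fun θ => psiF n (π - θ) * (1 / RF d (π - θ) ^ n - 1))
      MeasureTheory.volume 0 π := hGc'.intervalIntegrable 0 π
  -- splitting the integral
  have hsplit : (∫ θ in (0:ℝ)..π, psiF n θ * (1 / RF d θ ^ n - 1 / a ^ n))
      = (∫ θ in (0:ℝ)..π, psiF n θ * (1 / RF 0 θ ^ n - 1 / a ^ n))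
        + ∫ θ in (0:ℝ)..π, psiF n θ * (1 / RF d θ ^ n - 1) := by
    rw [← intervalIntegral.integral_add (hInt 0 le_rfl one_pos (1 / a ^ n)) hGint]
    apply intervalIntegral.integral_congr
    intro θ _
    simp only [RF_zero, one_pow]
    ring
  -- symmetrization
  have hsym : (∫ θ in (0:ℝ)..π, psiF n θ * (1 / RF d θ ^ n - 1))
      = ∫ θ in (0:ℝ)..π, psiF n (π - θ) * (1 / RF d (π - θ) ^ n - 1) := by
    have h := intervalIntegral.integral_comp_sub_left
      (a := (0:ℝ)) (b := π) (fun θ => psiF n θ * (1 / RF d θ ^ n - 1)) π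
    simp only [sub_self, sub_zero] at h
    exact h.symm
  have h2G : (2:ℝ) * (∫ θ in (0:ℝ)..π, psiF n θ * (1 / RF d θ ^ n - 1))
      = ∫ θ in (0:ℝ)..π, (psiF n θ * (1 / RF d θ ^ n - 1)
          + psiF n (π - θ) * (1 / RF d (π - θ) ^ n - 1)) := by
    rw [intervalIntegral.integral_add hGint hGint', ← hsym]; ring
  have hGnonneg : 0 ≤ ∫ θ in (0:ℝ)..π, psiF n θ * (1 / RF d θ ^ n - 1) := by
    have h0 : 0 ≤ ∫ θ in (0:ℝ)..π, (psiF n θ * (1 / RF d θ ^ n - 1)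
        + psiF n (π - θ) * (1 / RF d (π - θ) ^ n - 1)) :=
      intervalIntegral.integral_nonneg Real.pi_pos.le
        (fun θ hθ => pair_nonneg hn hd0 hd1 hθ)
    linarith [h2G ▸ h0]
  refine ⟨?_, ?_, ?_⟩
  · intro θ hθ
    exact psiF_nonneg n hn (Real.sin_nonneg_of_nonneg_of_le_pi hθ.1 hθ.2)
  · rw [hsplit]; linarith
  · constructor
    · intro heq
      by_contra hdne
      have hdpos : 0 < d := lt_of_le_of_ne hd0 (Ne.symm hdne)
      have hpos : 0 < ∫ θ in (0:ℝ)..π, (psiF n θ * (1 / RF d θ ^ n - 1)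
          + psiF n (π - θ) * (1 / RF d (π - θ) ^ n - 1)) :=
        intervalIntegral.intervalIntegral_pos_of_pos_on (hGint.add hGint')
          (fun θ hθ => pair_pos hn hdpos hd1 hθ) Real.pi_pos
      rw [hsplit] at heq
      have : (0:ℝ) < 2 * (∫ θ in (0:ℝ)..π, psiF n θ * (1 / RF d θ ^ n - 1)) := h2G ▸ hpos
      linarith
    · rintro rfl
      rfl
end

section
/- Let n ≥ 2 be an integer and define ψ_n(θ) = n(n−2)·sinⁿ(θ) + (n−1)·sin^{n−2}(θ). Then the function G : [0,1) → ℝ defined by G(d) = ∫₀^π ψ_n(θ)·(1 + d·cos θ)^{−n} dθ is strictly increasing; in particular, for every d ∈ (0,1), G'(d) = n·∫₀^{π/2} ψ_n(θ)·cos θ·( (1 − d·cos θ)^{−(n+1)} − (1 + d·cos θ)^{−(n+1)} ) dθ > 0. -/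
open Real MeasureTheory intervalIntegral Metric Set

private lemma den_pos {x c : ℝ} (hx : |x| < 1) (hc : |c| ≤ 1) : 0 < 1 + x * c := by
  have h : |x * c| < 1 := by
    rw [abs_mul]
    calc |x| * |c| ≤ |x| * 1 := mul_le_mul_of_nonneg_left hc (abs_nonneg x)
      _ = |x| := mul_one _
      _ < 1 := hx
  have h2 := (abs_lt.mp h).1
  linarith

private lemma den_pos' {x c : ℝ} (hx : |x| < 1) (hc : |c| ≤ 1) : 0 < 1 - x * c := by
  have := den_pos (x := -x) (c := c) (by rwa [abs_neg]) hc
  linarith [this]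

private lemma cont_psi (n : ℕ) :
    Continuous (fun θ : ℝ => (n : ℝ) * ((n : ℝ) - 2) * Real.sin θ ^ n +
      ((n : ℝ) - 1) * Real.sin θ ^ (n - 2)) := by continuity

private lemma cont_inv (k : ℕ) {x : ℝ} (hx : |x| < 1) :
    Continuous (fun θ : ℝ => 1 / (1 + x * Real.cos θ) ^ k) :=
  continuous_const.div (by continuity)
    (fun θ => pow_ne_zero _ (den_pos hx (abs_cos_le_one θ)).ne')

private lemma cont_inv' (k : ℕ) {x : ℝ} (hx : |x| < 1) :
    Continuous (fun θ : ℝ => 1 / (1 - x * Real.cos θ) ^ k) :=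
  continuous_const.div (by continuity)
    (fun θ => pow_ne_zero _ (den_pos' hx (abs_cos_le_one θ)).ne')

private lemma hasDeriv_pt (n : ℕ) {x c : ℝ} (hA : 0 < 1 + x * c) :
    HasDerivAt (fun x : ℝ => 1 / (1 + x * c) ^ n)
      (-((n : ℝ) * c) / (1 + x * c) ^ (n + 1)) x := by
  have h1 : HasDerivAt (fun x : ℝ => 1 + x * c) c x := by
    simpa using ((hasDerivAt_id x).mul_const c).const_add 1
  have h3 : HasDerivAt (fun x : ℝ => ((1 + x * c) ^ n)⁻¹)
      (-((n : ℝ) * (1 + x * c) ^ (n - 1) * c) / ((1 + x * c) ^ n) ^ 2) x :=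
    (h1.pow n).inv (pow_ne_zero n hA.ne')
  have : (fun x : ℝ => 1 / (1 + x * c) ^ n) = fun x : ℝ => ((1 + x * c) ^ n)⁻¹ := by
    funext y; rw [one_div]
  rw [this]
  convert h3 using 1
  rcases Nat.eq_zero_or_pos n with h0 | hpos
  · subst h0; simp
  set A := 1 + x * c with hAdef
  have e1 : (A ^ n) ^ 2 = A ^ (n - 1) * A ^ (n + 1) := by
    rw [← pow_mul, ← pow_add]; congr 1; omega
  rw [e1]
  have ha1 : A ^ (n - 1) ≠ 0 := pow_ne_zero _ hA.ne'
  have ha2 : A ^ (n + 1) ≠ 0 := pow_ne_zero _ hA.ne'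
  field_simp

private lemma val_eq (n : ℕ) {d : ℝ} (hd : |d| < 1) :
    (∫ θ in (0:ℝ)..π,
      ((n : ℝ) * ((n : ℝ) - 2) * Real.sin θ ^ n + ((n : ℝ) - 1) * Real.sin θ ^ (n - 2)) *
        (-((n : ℝ) * Real.cos θ) / (1 + d * Real.cos θ) ^ (n + 1)))
    = (n : ℝ) * ∫ θ in (0:ℝ)..(π/2),
        ((n : ℝ) * ((n : ℝ) - 2) * Real.sin θ ^ n + ((n : ℝ) - 1) * Real.sin θ ^ (n - 2)) *
          Real.cos θ *
          (1 / (1 - d * Real.cos θ) ^ (n + 1) - 1 / (1 + d * Real.cos θ) ^ (n + 1)) := by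
  set f : ℝ → ℝ := fun θ =>
    ((n : ℝ) * ((n : ℝ) - 2) * Real.sin θ ^ n + ((n : ℝ) - 1) * Real.sin θ ^ (n - 2)) *
      (-((n : ℝ) * Real.cos θ) / (1 + d * Real.cos θ) ^ (n + 1)) with hf
  have hcf : Continuous f := by
    rw [hf]
    exact (cont_psi n).mul (Continuous.div (by continuity) (by continuity)
      (fun θ => pow_ne_zero _ (den_pos hd (abs_cos_le_one θ)).ne'))
  have i1 : IntervalIntegrable f volume 0 (π/2) := hcf.intervalIntegrable _ _
  have i2 : IntervalIntegrable f volume (π/2) π := hcf.intervalIntegrable _ _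
  have icomp : IntervalIntegrable (fun θ => f (π - θ)) volume 0 (π/2) :=
    (hcf.comp (by continuity)).intervalIntegrable _ _
  have hsub : (∫ θ in (0:ℝ)..(π/2), f (π - θ)) = ∫ θ in (π/2:ℝ)..π, f θ := by
    have h := intervalIntegral.integral_comp_sub_left (a := (0:ℝ)) (b := π/2) f π
    have h1 : π - π/2 = π/2 := by ring
    have h2 : π - 0 = π := by ring
    rw [h, h1, h2]
  calc (∫ θ in (0:ℝ)..π, f θ)
      = (∫ θ in (0:ℝ)..(π/2), f θ) + ∫ θ in (π/2:ℝ)..π, f θ :=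
        (intervalIntegral.integral_add_adjacent_intervals i1 i2).symm
    _ = (∫ θ in (0:ℝ)..(π/2), f θ) + ∫ θ in (0:ℝ)..(π/2), f (π - θ) := by rw [hsub]
    _ = ∫ θ in (0:ℝ)..(π/2), (f θ + f (π - θ)) := (intervalIntegral.integral_add i1 icomp).symm
    _ = ∫ θ in (0:ℝ)..(π/2), (n : ℝ) *
          (((n : ℝ) * ((n : ℝ) - 2) * Real.sin θ ^ n + ((n : ℝ) - 1) * Real.sin θ ^ (n - 2)) *
            Real.cos θ *
            (1 / (1 - d * Real.cos θ) ^ (n + 1) - 1 / (1 + d * Real.cos θ) ^ (n + 1))) := by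
        refine intervalIntegral.integral_congr (fun θ _ => ?_)
        rw [hf]
        simp only [Real.sin_pi_sub, Real.cos_pi_sub]
        have e : 1 + d * -Real.cos θ = 1 - d * Real.cos θ := by ring
        rw [e]
        have hP : ((1 + d * Real.cos θ) ^ (n + 1)) ≠ 0 :=
          pow_ne_zero _ (den_pos hd (abs_cos_le_one θ)).ne'
        have hM : ((1 - d * Real.cos θ) ^ (n + 1)) ≠ 0 :=
          pow_ne_zero _ (den_pos' hd (abs_cos_le_one θ)).ne'
        field_simp
        ring
    _ = (n : ℝ) * ∫ θ in (0:ℝ)..(π/2),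
          ((n : ℝ) * ((n : ℝ) - 2) * Real.sin θ ^ n + ((n : ℝ) - 1) * Real.sin θ ^ (n - 2)) *
            Real.cos θ *
            (1 / (1 - d * Real.cos θ) ^ (n + 1) - 1 / (1 + d * Real.cos θ) ^ (n + 1)) :=
        intervalIntegral.integral_const_mul _ _

private lemma int_pos (n : ℕ) (hn : 2 ≤ n) {d : ℝ} (hd : d ∈ Set.Ioo (0:ℝ) 1) :
    0 < ∫ θ in (0:ℝ)..(π/2),
        ((n : ℝ) * ((n : ℝ) - 2) * Real.sin θ ^ n + ((n : ℝ) - 1) * Real.sin θ ^ (n - 2)) *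
          Real.cos θ *
          (1 / (1 - d * Real.cos θ) ^ (n + 1) - 1 / (1 + d * Real.cos θ) ^ (n + 1)) := by
  have hd1 : |d| < 1 := abs_lt.mpr ⟨by linarith [hd.1], hd.2⟩
  have hn2 : (0:ℝ) ≤ (n : ℝ) - 2 := by
    have : (2:ℝ) ≤ (n:ℝ) := by exact_mod_cast hn
    linarith
  have hn1 : (0:ℝ) < (n : ℝ) - 1 := by linarith
  refine intervalIntegral.intervalIntegral_pos_of_pos_on ?_ ?_ (by linarith [Real.pi_pos])
  · exact (((cont_psi n).mul Real.continuous_cos).mul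
      ((cont_inv' (n+1) hd1).sub (cont_inv (n+1) hd1))).intervalIntegrable _ _
  · intro θ hθ
    have hsin : 0 < Real.sin θ :=
      Real.sin_pos_of_pos_of_lt_pi hθ.1 (lt_trans hθ.2 (by linarith [Real.pi_pos]))
    have hcos : 0 < Real.cos θ :=
      Real.cos_pos_of_mem_Ioo ⟨by linarith [Real.pi_pos, hθ.1], hθ.2⟩
    have hψ : 0 < (n : ℝ) * ((n : ℝ) - 2) * Real.sin θ ^ n +
        ((n : ℝ) - 1) * Real.sin θ ^ (n - 2) := by
      have h1 : 0 ≤ (n : ℝ) * ((n : ℝ) - 2) * Real.sin θ ^ n := by positivity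
      have h2 : 0 < ((n : ℝ) - 1) * Real.sin θ ^ (n - 2) :=
        mul_pos hn1 (pow_pos hsin _)
      linarith
    have hP : 0 < 1 + d * Real.cos θ := den_pos hd1 (abs_cos_le_one θ)
    have hM : 0 < 1 - d * Real.cos θ := den_pos' hd1 (abs_cos_le_one θ)
    have hdc : 0 < d * Real.cos θ := mul_pos hd.1 hcos
    have hlt : (1 - d * Real.cos θ) ^ (n+1) < (1 + d * Real.cos θ) ^ (n+1) :=
      pow_lt_pow_left₀ (by linarith) hM.le (Nat.succ_ne_zero n)
    have hdiff : 0 < 1 / (1 - d * Real.cos θ) ^ (n + 1) - 1 / (1 + d * Real.cos θ) ^ (n + 1) := by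
      have := one_div_lt_one_div_of_lt (pow_pos hM (n+1)) hlt
      linarith
    exact mul_pos (mul_pos hψ hcos) hdiff

private lemma keyD_raw (n : ℕ) (hn : 2 ≤ n) {d : ℝ} (hd : |d| < 1) :
    HasDerivAt (fun d : ℝ => ∫ θ in (0:ℝ)..π,
        ((n : ℝ) * ((n : ℝ) - 2) * Real.sin θ ^ n + ((n : ℝ) - 1) * Real.sin θ ^ (n - 2)) *
          (1 / (1 + d * Real.cos θ) ^ n))
      (∫ θ in (0:ℝ)..π,
        ((n : ℝ) * ((n : ℝ) - 2) * Real.sin θ ^ n + ((n : ℝ) - 1) * Real.sin θ ^ (n - 2)) *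
          (-((n : ℝ) * Real.cos θ) / (1 + d * Real.cos θ) ^ (n + 1))) d := by
  set ψ : ℝ → ℝ := fun θ =>
    (n : ℝ) * ((n : ℝ) - 2) * Real.sin θ ^ n + ((n : ℝ) - 1) * Real.sin θ ^ (n - 2) with hψ
  set ε : ℝ := (1 - |d|) / 2 with hε
  have hε_pos : 0 < ε := by have := abs_nonneg d; simp [hε]; linarith
  set r : ℝ := (1 + |d|) / 2 with hr
  have hr1 : r < 1 := by simp [hr]; linarith
  have hball : ∀ x ∈ ball d ε, |x| ≤ r := by
    intro x hx
    rw [mem_ball, dist_eq] at hx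
    have := abs_sub_abs_le_abs_sub x d
    simp [hr]; rw [hε] at hx; linarith
  have hball' : ∀ x ∈ ball d ε, |x| < 1 := fun x hx => lt_of_le_of_lt (hball x hx) hr1
  set F' : ℝ → ℝ → ℝ := fun x θ => ψ θ * (-((n : ℝ) * Real.cos θ) / (1 + x * Real.cos θ) ^ (n + 1))
    with hF'
  set C : ℝ := (n : ℝ) * ((n : ℝ) - 2) + ((n : ℝ) - 1) with hC
  have hC0 : 0 ≤ C := by
    have : (2:ℝ) ≤ (n:ℝ) := by exact_mod_cast hn
    simp [hC]; nlinarith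
  set bound : ℝ → ℝ := fun _ => C * ((n : ℝ) / (1 - r) ^ (n + 1)) with hbound
  have key := intervalIntegral.hasDerivAt_integral_of_dominated_loc_of_deriv_le
    (F := fun x θ => ψ θ * (1 / (1 + x * Real.cos θ) ^ n)) (F' := F')
    (x₀ := d) (a := 0) (b := π) (μ := volume) (bound := bound) (ball_mem_nhds d hε_pos)
    ?_ ?_ ?_ ?_ ?_ ?_
  · exact key.2
  · -- hF_meas
    filter_upwards [ball_mem_nhds d hε_pos] with x hx
    exact ((cont_psi n).mul (cont_inv n (hball' x hx))).aestronglyMeasurable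
  · -- hF_int
    exact ((cont_psi n).mul (cont_inv n hd)).intervalIntegrable _ _
  · -- hF'_meas
    refine Continuous.aestronglyMeasurable ?_
    exact (cont_psi n).mul (Continuous.div (by continuity) (by continuity)
      (fun θ => pow_ne_zero _ (den_pos hd (abs_cos_le_one θ)).ne'))
  · -- h_bound
    refine Filter.Eventually.of_forall (fun θ hθ x hx => ?_)
    have hθ' : θ ∈ Set.Ioc (0:ℝ) π := by rwa [Set.uIoc_of_le Real.pi_pos.le] at hθ
    have hsin : 0 ≤ Real.sin θ := Real.sin_nonneg_of_nonneg_of_le_pi hθ'.1.le hθ'.2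
    have hsin1 : Real.sin θ ≤ 1 := Real.sin_le_one θ
    have hn2 : (0:ℝ) ≤ (n : ℝ) - 2 := by
      have : (2:ℝ) ≤ (n:ℝ) := by exact_mod_cast hn
      linarith
    have hnn : (0:ℝ) ≤ (n : ℝ) * ((n : ℝ) - 2) := by positivity
    have hn1 : (0:ℝ) ≤ (n : ℝ) - 1 := by linarith
    have hψ0 : 0 ≤ ψ θ := by
      simp only [hψ]
      have := pow_nonneg hsin n
      have := pow_nonneg hsin (n-2)
      positivity
    have hψle : ψ θ ≤ C := by
      simp only [hψ, hC]
      have h1 : Real.sin θ ^ n ≤ 1 := pow_le_one₀ hsin hsin1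
      have h2 : Real.sin θ ^ (n-2) ≤ 1 := pow_le_one₀ hsin hsin1
      nlinarith
    have hA : 0 < 1 + x * Real.cos θ := den_pos (hball' x hx) (abs_cos_le_one θ)
    have hxr : |x * Real.cos θ| ≤ r := by
      rw [abs_mul]
      calc |x| * |Real.cos θ| ≤ |x| * 1 :=
            mul_le_mul_of_nonneg_left (abs_cos_le_one θ) (abs_nonneg x)
        _ = |x| := mul_one _
        _ ≤ r := hball x hx
    have hAr : 1 - r ≤ 1 + x * Real.cos θ := by
      have := neg_abs_le (x * Real.cos θ); linarith
    have hrpos : 0 < 1 - r := by linarith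
    have step : ‖F' x θ‖ = ψ θ * (((n:ℝ) * |Real.cos θ|) / (1 + x * Real.cos θ) ^ (n+1)) := by
      rw [hF']
      rw [Real.norm_eq_abs, abs_mul, abs_div, abs_neg, abs_mul, abs_pow,
        abs_of_pos hA, abs_of_nonneg hψ0, Nat.abs_cast]
    rw [step, hbound]
    refine mul_le_mul hψle ?_ ?_ hC0
    · refine div_le_div₀ (Nat.cast_nonneg n) ?_ (pow_pos hrpos _)
        (pow_le_pow_left₀ hrpos.le hAr _)
      exact mul_le_of_le_one_right (Nat.cast_nonneg n) (abs_cos_le_one θ)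
    · exact div_nonneg (mul_nonneg (Nat.cast_nonneg n) (abs_nonneg _))
        (pow_pos hA _).le
  · -- bound_integrable
    exact intervalIntegrable_const
  · -- h_diff
    refine Filter.Eventually.of_forall (fun θ hθ x hx => ?_)
    have hA : 0 < 1 + x * Real.cos θ := den_pos (hball' x hx) (abs_cos_le_one θ)
    exact HasDerivAt.const_mul (ψ θ) (hasDeriv_pt n hA)


private lemma keyD (n : ℕ) (hn : 2 ≤ n) {d : ℝ} (hd : |d| < 1) :
    HasDerivAt (fun d : ℝ => ∫ θ in (0:ℝ)..π,
        ((n : ℝ) * ((n : ℝ) - 2) * Real.sin θ ^ n + ((n : ℝ) - 1) * Real.sin θ ^ (n - 2)) *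
          (1 / (1 + d * Real.cos θ) ^ n))
      ((n : ℝ) * ∫ θ in (0:ℝ)..(π/2),
        ((n : ℝ) * ((n : ℝ) - 2) * Real.sin θ ^ n + ((n : ℝ) - 1) * Real.sin θ ^ (n - 2)) *
          Real.cos θ *
          (1 / (1 - d * Real.cos θ) ^ (n + 1) - 1 / (1 + d * Real.cos θ) ^ (n + 1))) d := by
  have h := keyD_raw n hn hd
  rwa [val_eq n hd] at h

/-- For `n ≥ 2`, with `ψ_n(θ) = n(n−2)·sinⁿθ + (n−1)·sin^{n−2}θ`, the function
`G(d) = ∫₀^π ψ_n(θ)·(1 + d·cos θ)^{−n} dθ` is strictly increasing on `[0,1)`;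
in particular, for every `d ∈ (0,1)`,
`G'(d) = n·∫₀^{π/2} ψ_n(θ)·cos θ·((1 − d·cos θ)^{−(n+1)} − (1 + d·cos θ)^{−(n+1)}) dθ > 0`. -/
theorem stmt_6 (n : ℕ) (hn : 2 ≤ n) :
    StrictMonoOn (fun d : ℝ => ∫ θ in (0:ℝ)..π,
        ((n : ℝ) * ((n : ℝ) - 2) * Real.sin θ ^ n + ((n : ℝ) - 1) * Real.sin θ ^ (n - 2)) *
          (1 / (1 + d * Real.cos θ) ^ n))
      (Set.Ico (0:ℝ) 1) ∧
    ∀ d ∈ Set.Ioo (0:ℝ) 1,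
      HasDerivAt (fun d : ℝ => ∫ θ in (0:ℝ)..π,
          ((n : ℝ) * ((n : ℝ) - 2) * Real.sin θ ^ n + ((n : ℝ) - 1) * Real.sin θ ^ (n - 2)) *
            (1 / (1 + d * Real.cos θ) ^ n))
        ((n : ℝ) * ∫ θ in (0:ℝ)..(π/2),
          ((n : ℝ) * ((n : ℝ) - 2) * Real.sin θ ^ n + ((n : ℝ) - 1) * Real.sin θ ^ (n - 2)) *
            Real.cos θ *
            (1 / (1 - d * Real.cos θ) ^ (n + 1) - 1 / (1 + d * Real.cos θ) ^ (n + 1))) d ∧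
      0 < (n : ℝ) * ∫ θ in (0:ℝ)..(π/2),
          ((n : ℝ) * ((n : ℝ) - 2) * Real.sin θ ^ n + ((n : ℝ) - 1) * Real.sin θ ^ (n - 2)) *
            Real.cos θ *
            (1 / (1 - d * Real.cos θ) ^ (n + 1) - 1 / (1 + d * Real.cos θ) ^ (n + 1)) := by
  have hnpos : (0:ℝ) < (n : ℝ) := by
    have : (2:ℝ) ≤ (n:ℝ) := by exact_mod_cast hn
    linarith
  constructor
  · refine strictMonoOn_of_deriv_pos (convex_Ico 0 1) ?_ ?_
    · intro x hx
      have hx1 : |x| < 1 := abs_lt.mpr ⟨by linarith [hx.1], hx.2⟩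
      exact (keyD n hn hx1).continuousAt.continuousWithinAt
    · intro x hx
      rw [interior_Ico] at hx
      have hx1 : |x| < 1 := abs_lt.mpr ⟨by linarith [hx.1], hx.2⟩
      rw [(keyD n hn hx1).deriv]
      exact mul_pos hnpos (int_pos n hn hx)
  · intro d hd
    have hd1 : |d| < 1 := abs_lt.mpr ⟨by linarith [hd.1], hd.2⟩
    exact ⟨keyD n hn hd1, mul_pos hnpos (int_pos n hn hd)⟩
end

section
/- Let n ≥ 2 be an integer and d ∈ [0,1). Then V₁ⁿ(d) := ∫₀^π sinⁿ(θ)·R_d(θ)^{n+1}/√(1 − d²·sin² θ) dθ = ∫₀^π sinⁿ(θ) dθ = V₁ⁿ(0), where R_d(θ) = d·cos θ + √(1 − d²·sin² θ). (Equivalently, ∫₀^π sinⁿ(θ)·R_d(θ)ⁿ·√(R_d(θ)² + R_d'(θ)²) dθ is independent of d.) -/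
open Real

private lemma aux_pow (n : ℕ) (x c ρ : ℝ) (hc : c ≠ 0) (hρ : 0 < ρ) :
    c / ρ ^ 2 * ((x / ρ) ^ n * ρ ^ (n + 1) / (c / ρ)) = x ^ n := by
  have hρ0 : ρ ≠ 0 := hρ.ne'
  field_simp
  have h' : ρ ^ n * ρ⁻¹ ^ n = 1 := by rw [← mul_pow, mul_inv_cancel₀ hρ0, one_pow]
  linear_combination (x ^ n * ρ) * h'

/-- For `n ≥ 2` and `d ∈ [0,1)`, with `R_d(θ) = d·cos θ + √(1 − d²·sin² θ)`,
`V₁ⁿ(d) = ∫₀^π sinⁿθ·R_d(θ)^{n+1}/√(1 − d²·sin² θ) dθ = ∫₀^π sinⁿθ dθ = V₁ⁿ(0)`. -/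
theorem stmt_7 (n : ℕ) (hn : 2 ≤ n) (d : ℝ) (hd : d ∈ Set.Ico (0:ℝ) 1) :
    (∫ θ in (0:ℝ)..π, Real.sin θ ^ n *
        (d * Real.cos θ + Real.sqrt (1 - d ^ 2 * Real.sin θ ^ 2)) ^ (n + 1) /
          Real.sqrt (1 - d ^ 2 * Real.sin θ ^ 2))
      = ∫ θ in (0:ℝ)..π, Real.sin θ ^ n := by
  obtain ⟨hd0, hd1⟩ := hd
  -- notation
  set g : ℝ → ℝ := fun θ => Real.sin θ ^ n *
      (d * Real.cos θ + Real.sqrt (1 - d ^ 2 * Real.sin θ ^ 2)) ^ (n + 1) /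
        Real.sqrt (1 - d ^ 2 * Real.sin θ ^ 2) with hg
  set f : ℝ → ℝ := fun φ => φ - Real.arctan (d * Real.sin φ / (1 + d * Real.cos φ)) with hf
  set f' : ℝ → ℝ := fun φ => (1 + d * Real.cos φ) / (1 + 2 * d * Real.cos φ + d ^ 2) with hf'
  -- basic positivity facts
  have hc : ∀ φ : ℝ, 0 < 1 + d * Real.cos φ := by
    intro φ
    nlinarith [Real.neg_one_le_cos φ, Real.cos_le_one φ]
  have hs : ∀ φ : ℝ, 0 < 1 + 2 * d * Real.cos φ + d ^ 2 := by
    intro φ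
    nlinarith [Real.neg_one_le_cos φ, Real.cos_le_one φ]
  have hpos : ∀ θ : ℝ, 0 < 1 - d ^ 2 * Real.sin θ ^ 2 := by
    intro θ
    nlinarith [Real.sin_sq_le_one θ, sq_nonneg (d * Real.sin θ)]
  -- derivative of f
  have hderiv : ∀ φ : ℝ, HasDerivAt f (f' φ) φ := by
    intro φ
    have hcφ := hc φ
    have hsφ := hs φ
    have hu : HasDerivAt (fun φ => d * Real.sin φ / (1 + d * Real.cos φ))
        ((d * Real.cos φ + d ^ 2) / (1 + d * Real.cos φ) ^ 2) φ := by
      have h1 : HasDerivAt (fun φ => d * Real.sin φ) (d * Real.cos φ) φ :=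
        (Real.hasDerivAt_sin φ).const_mul d
      have h2 : HasDerivAt (fun φ => 1 + d * Real.cos φ) (d * -Real.sin φ) φ :=
        ((Real.hasDerivAt_cos φ).const_mul d).const_add 1
      have := h1.div h2 (ne_of_gt hcφ)
      refine this.congr_deriv ?_
      have := Real.sin_sq_add_cos_sq φ
      congr 1
      ring_nf
      nlinarith [Real.sin_sq_add_cos_sq φ]
    have harc := hu.arctan
    have hmain := (hasDerivAt_id φ).sub harc
    refine hmain.congr_deriv ?_
    symm
    have h12 : 1 + (d * Real.sin φ / (1 + d * Real.cos φ)) ^ 2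
        = (1 + 2 * d * Real.cos φ + d ^ 2) / (1 + d * Real.cos φ) ^ 2 := by
      field_simp
      nlinarith [Real.sin_sq_add_cos_sq φ]
    rw [h12]
    simp only [hf']
    field_simp [hf']
    ring_nf
    have hX : (1 + d * cos φ * 2 + d ^ 2) * (1 + d * cos φ * 2 + d ^ 2)⁻¹ = 1 :=
      mul_inv_cancel₀ (by linarith)
    linear_combination hX
  have hgcont : Continuous g := by
    apply Continuous.div
    · fun_prop
    · fun_prop
    · intro θ; exact ne_of_gt (Real.sqrt_pos.mpr (hpos θ))
  have hf'cont : Continuous f' := by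
    apply Continuous.div
    · fun_prop
    · fun_prop
    · intro φ; exact ne_of_gt (hs φ)
  have hf0 : f 0 = 0 := by simp [hf]
  have hfπ : f π = π := by simp [hf]
  have hpoint : Set.EqOn (fun φ => f' φ • g (f φ)) (fun φ => Real.sin φ ^ n)
      (Set.uIcc (0:ℝ) π) := by
    intro φ hφ
    have hsinφ : 0 ≤ Real.sin φ := by
      rw [Set.uIcc_of_le Real.pi_pos.le] at hφ
      exact Real.sin_nonneg_of_nonneg_of_le_pi hφ.1 hφ.2
    have hpyth := Real.sin_sq_add_cos_sq φ
    obtain ⟨c, hcdef⟩ : ∃ c : ℝ, c = 1 + d * Real.cos φ := ⟨_, rfl⟩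
    obtain ⟨s, hsdef⟩ : ∃ s : ℝ, s = 1 + 2 * d * Real.cos φ + d ^ 2 := ⟨_, rfl⟩
    obtain ⟨ρ, hρdef⟩ : ∃ ρ : ℝ, ρ = Real.sqrt s := ⟨_, rfl⟩
    have hcφ : 0 < c := hcdef ▸ hc φ
    have hsφ : 0 < s := hsdef ▸ hs φ
    have hρ : 0 < ρ := hρdef ▸ Real.sqrt_pos.mpr hsφ
    have hρ2 : ρ ^ 2 = s := hρdef ▸ Real.sq_sqrt hsφ.le
    have hsqrt1 : Real.sqrt (1 + (d * Real.sin φ / c) ^ 2) = ρ / c := by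
      have h1 : 1 + (d * Real.sin φ / c) ^ 2 = (ρ / c) ^ 2 := by
        field_simp
        linear_combination (c + 1 + d * Real.cos φ) * hcdef + d ^ 2 * hpyth - hρ2 - hsdef
      rw [h1, Real.sqrt_sq (by positivity)]
    have hsinf : Real.sin (f φ) = Real.sin φ / ρ := by
      rw [hf]
      simp only [← hcdef, Real.sin_sub, Real.sin_arctan, Real.cos_arctan, hsqrt1]
      field_simp
      linear_combination Real.sin φ * hcdef
    have hcosf : Real.cos (f φ) = (Real.cos φ + d) / ρ := by
      rw [hf]
      simp only [← hcdef, Real.cos_sub, Real.sin_arctan, Real.cos_arctan, hsqrt1]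
      field_simp
      linear_combination Real.cos φ * hcdef + d * hpyth
    have h1ms : 1 - d ^ 2 * Real.sin (f φ) ^ 2 = (c / ρ) ^ 2 := by
      rw [hsinf]
      field_simp
      linear_combination hρ2 + hsdef - (c + 1 + d * Real.cos φ) * hcdef - d ^ 2 * hpyth
    have hsq2 : Real.sqrt (1 - d ^ 2 * Real.sin (f φ) ^ 2) = c / ρ := by
      rw [h1ms, Real.sqrt_sq (by positivity)]
    have hR : d * Real.cos (f φ) + Real.sqrt (1 - d ^ 2 * Real.sin (f φ) ^ 2) = ρ := by
      rw [hcosf, hsq2]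
      field_simp
      linear_combination hcdef - hsdef - hρ2
    simp only [smul_eq_mul, hg, hf']
    rw [hR, hsq2, hsinf, ← hcdef, ← hsdef, ← hρ2]
    exact aux_pow n (Real.sin φ) c ρ hcφ.ne' hρ
  calc (∫ θ in (0:ℝ)..π, g θ)
      = ∫ θ in (f 0)..(f π), g θ := by rw [hf0, hfπ]
    _ = ∫ φ in (0:ℝ)..π, f' φ • g (f φ) :=
        (intervalIntegral.integral_comp_smul_deriv (fun x _ => hderiv x)
          hf'cont.continuousOn hgcont).symm
    _ = ∫ φ in (0:ℝ)..π, Real.sin φ ^ n := intervalIntegral.integral_congr hpoint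
end

section
/- Let n ≥ 1 be an integer and d ∈ [0,1). Then V₃ⁿ(d) := ∫₀^π sinⁿ(θ)/( R_d(θ)^{n−1}·√(1 − d²·sin² θ) ) dθ ≥ ∫₀^π sinⁿ(θ) dθ = V₃ⁿ(0), with equality if and only if d = 0, where R_d(θ) = d·cos θ + √(1 − d²·sin² θ). -/
open Real

section aux

variable {d : ℝ}

lemma aux_arg_pos (hd : d ∈ Set.Ico (0:ℝ) 1) (θ : ℝ) :
    0 < 1 - d ^ 2 * Real.sin θ ^ 2 := by
  obtain ⟨h0, h1⟩ := hd
  nlinarith [Real.sin_sq_le_one θ, sq_nonneg (Real.sin θ), sq_nonneg d]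

lemma aux_s_pos (hd : d ∈ Set.Ico (0:ℝ) 1) (θ : ℝ) :
    0 < Real.sqrt (1 - d ^ 2 * Real.sin θ ^ 2) :=
  Real.sqrt_pos.2 (aux_arg_pos hd θ)

lemma aux_s_le_one (hd : d ∈ Set.Ico (0:ℝ) 1) (θ : ℝ) :
    Real.sqrt (1 - d ^ 2 * Real.sin θ ^ 2) ≤ 1 := by
  have h := Real.sqrt_le_sqrt (show 1 - d ^ 2 * Real.sin θ ^ 2 ≤ 1 by
    nlinarith [sq_nonneg (d * Real.sin θ)])
  simpa using h

lemma aux_sq (hd : d ∈ Set.Ico (0:ℝ) 1) (θ : ℝ) :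
    Real.sqrt (1 - d ^ 2 * Real.sin θ ^ 2) ^ 2 = 1 - d ^ 2 * Real.sin θ ^ 2 :=
  Real.sq_sqrt (aux_arg_pos hd θ).le

lemma aux_R_pos (hd : d ∈ Set.Ico (0:ℝ) 1) (θ : ℝ) :
    0 < d * Real.cos θ + Real.sqrt (1 - d ^ 2 * Real.sin θ ^ 2) := by
  have hs := aux_s_pos hd θ
  have hsq := aux_sq hd θ
  have hpyth := Real.sin_sq_add_cos_sq θ
  obtain ⟨h0, h1⟩ := hd
  nlinarith [sq_nonneg (d * Real.cos θ + Real.sqrt (1 - d ^ 2 * Real.sin θ ^ 2)),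
    sq_nonneg (d * Real.cos θ - Real.sqrt (1 - d ^ 2 * Real.sin θ ^ 2))]

/-- the integrand -/
noncomputable def Fd (d : ℝ) (n : ℕ) (θ : ℝ) : ℝ :=
  Real.sin θ ^ n /
    ((d * Real.cos θ + Real.sqrt (1 - d ^ 2 * Real.sin θ ^ 2)) ^ (n - 1) *
      Real.sqrt (1 - d ^ 2 * Real.sin θ ^ 2))

lemma aux_cont (hd : d ∈ Set.Ico (0:ℝ) 1) (n : ℕ) : Continuous (Fd d n) := by
  have hc : Continuous fun θ : ℝ => 1 - d ^ 2 * Real.sin θ ^ 2 := by fun_prop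
  have hs : Continuous fun θ : ℝ => Real.sqrt (1 - d ^ 2 * Real.sin θ ^ 2) :=
    Real.continuous_sqrt.comp hc
  apply Continuous.div
  · fun_prop
  · exact (((continuous_const.mul Real.continuous_cos).add hs).pow _).mul hs
  · intro θ
    exact (mul_pos (pow_pos (aux_R_pos hd θ) _) (aux_s_pos hd θ)).ne'

lemma aux_amgm {a b : ℝ} (ha : 0 < a) (hb : 0 < b) (hab : a * b ≤ 1) :
    2 ≤ 1 / a + 1 / b := by
  have hu : 0 < 1 / a := by positivity
  have hv : 0 < 1 / b := by positivity
  have huv : 1 ≤ (1 / a) * (1 / b) := by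
    rw [div_mul_div_comm, one_mul, le_div_iff₀ (mul_pos ha hb), one_mul]
    exact hab
  nlinarith [sq_nonneg (1 / a - 1 / b)]

lemma aux_key_s9 (hd : d ∈ Set.Ico (0:ℝ) 1) (n : ℕ) {θ : ℝ} (hsin : 0 ≤ Real.sin θ) :
    2 * Real.sin θ ^ n ≤ Fd d n θ + Fd d n (π - θ) := by
  have hs := aux_s_pos hd θ
  have hs1 := aux_s_le_one hd θ
  have hsq := aux_sq hd θ
  have hR1 := aux_R_pos hd θ
  have hR2 := aux_R_pos hd (π - θ)
  set s := Real.sqrt (1 - d ^ 2 * Real.sin θ ^ 2) with hsdef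
  rw [Real.sin_pi_sub, Real.cos_pi_sub] at hR2
  rw [Fd, Fd, Real.sin_pi_sub, Real.cos_pi_sub, ← hsdef]
  set R₁ := d * Real.cos θ + s with hR1def
  set R₂ := d * -Real.cos θ + s with hR2def
  have hprod : R₁ * R₂ = 1 - d ^ 2 := by
    have := Real.sin_sq_add_cos_sq θ
    rw [hR1def, hR2def]
    nlinarith
  have ha : (0:ℝ) < R₁ ^ (n - 1) := pow_pos hR1 _
  have hb : (0:ℝ) < R₂ ^ (n - 1) := pow_pos hR2 _
  have hab : R₁ ^ (n - 1) * R₂ ^ (n - 1) ≤ 1 := by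
    rw [← mul_pow, hprod]
    apply pow_le_one₀ _ _ <;> nlinarith [hd.1, hd.2, sq_nonneg d]
  have h2 : 2 ≤ 1 / (R₁ ^ (n - 1) * s) + 1 / (R₂ ^ (n - 1) * s) := by
    have key : 2 ≤ 1 / R₁ ^ (n - 1) + 1 / R₂ ^ (n - 1) := aux_amgm ha hb hab
    have e1 : 1 / R₁ ^ (n - 1) ≤ 1 / (R₁ ^ (n - 1) * s) :=
      one_div_le_one_div_of_le (mul_pos ha hs) (by nlinarith)
    have e2 : 1 / R₂ ^ (n - 1) ≤ 1 / (R₂ ^ (n - 1) * s) :=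
      one_div_le_one_div_of_le (mul_pos hb hs) (by nlinarith)
    linarith
  have hp : 0 ≤ Real.sin θ ^ n := pow_nonneg hsin n
  calc 2 * Real.sin θ ^ n = Real.sin θ ^ n * 2 := by ring
    _ ≤ Real.sin θ ^ n * (1 / (R₁ ^ (n - 1) * s) + 1 / (R₂ ^ (n - 1) * s)) :=
        mul_le_mul_of_nonneg_left h2 hp
    _ = Real.sin θ ^ n / (R₁ ^ (n - 1) * s) + Real.sin θ ^ n / (R₂ ^ (n - 1) * s) := by
        ring

end aux

/-- For `n ≥ 1` and `d ∈ [0,1)`, with `R_d(θ) = d·cos θ + √(1 − d²·sin² θ)`,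
`V₃ⁿ(d) = ∫₀^π sinⁿθ/(R_d(θ)^{n−1}·√(1 − d²·sin² θ)) dθ ≥ ∫₀^π sinⁿθ dθ = V₃ⁿ(0)`,
with equality if and only if `d = 0`. -/
theorem stmt_9 (n : ℕ) (hn : 1 ≤ n) (d : ℝ) (hd : d ∈ Set.Ico (0:ℝ) 1) :
    (∫ θ in (0:ℝ)..π, Real.sin θ ^ n)
      ≤ (∫ θ in (0:ℝ)..π, Real.sin θ ^ n /
          ((d * Real.cos θ + Real.sqrt (1 - d ^ 2 * Real.sin θ ^ 2)) ^ (n - 1) *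
            Real.sqrt (1 - d ^ 2 * Real.sin θ ^ 2))) ∧
    ((∫ θ in (0:ℝ)..π, Real.sin θ ^ n /
          ((d * Real.cos θ + Real.sqrt (1 - d ^ 2 * Real.sin θ ^ 2)) ^ (n - 1) *
            Real.sqrt (1 - d ^ 2 * Real.sin θ ^ 2)))
        = (∫ θ in (0:ℝ)..π, Real.sin θ ^ n) ↔ d = 0) := by
  have hcont := aux_cont hd n
  have hcont' : Continuous fun θ => Fd d n (π - θ) :=
    hcont.comp (continuous_const.sub continuous_id)
  have hFint : IntervalIntegrable (Fd d n) MeasureTheory.volume 0 π :=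
    hcont.intervalIntegrable 0 π
  have hFint' : IntervalIntegrable (fun θ => Fd d n (π - θ)) MeasureTheory.volume 0 π :=
    hcont'.intervalIntegrable 0 π
  have hgint : IntervalIntegrable (fun θ => Real.sin θ ^ n) MeasureTheory.volume 0 π := by
    apply Continuous.intervalIntegrable; fun_prop
  have hsym : (∫ θ in (0:ℝ)..π, Fd d n (π - θ)) = ∫ θ in (0:ℝ)..π, Fd d n θ := by
    rw [intervalIntegral.integral_comp_sub_left (Fd d n) π]
    norm_num
  have hsum : (∫ θ in (0:ℝ)..π, (Fd d n θ + Fd d n (π - θ)))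
      = 2 * ∫ θ in (0:ℝ)..π, Fd d n θ := by
    rw [intervalIntegral.integral_add hFint hFint', hsym]; ring
  have hFeq : (∫ θ in (0:ℝ)..π, Real.sin θ ^ n /
        ((d * Real.cos θ + Real.sqrt (1 - d ^ 2 * Real.sin θ ^ 2)) ^ (n - 1) *
          Real.sqrt (1 - d ^ 2 * Real.sin θ ^ 2))) = ∫ θ in (0:ℝ)..π, Fd d n θ := rfl
  have hle : (∫ θ in (0:ℝ)..π, Real.sin θ ^ n) ≤ ∫ θ in (0:ℝ)..π, Fd d n θ := by
    have h := intervalIntegral.integral_mono_on (f := fun θ => 2 * Real.sin θ ^ n)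
      (g := fun θ => Fd d n θ + Fd d n (π - θ)) Real.pi_nonneg
      (by apply Continuous.intervalIntegrable; fun_prop) (hFint.add hFint')
      (fun x hx => aux_key_s9 hd n (Real.sin_nonneg_of_nonneg_of_le_pi hx.1 hx.2))
    rw [hsum, intervalIntegral.integral_const_mul] at h
    linarith
  refine ⟨by rw [hFeq]; exact hle, ?_, ?_⟩
  · -- equality → d = 0
    intro heq
    by_contra hd0
    have hdpos : 0 < d := lt_of_le_of_ne hd.1 (Ne.symm hd0)
    have hstrict : (∫ θ in (0:ℝ)..π, 2 * Real.sin θ ^ n)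
        < ∫ θ in (0:ℝ)..π, (Fd d n θ + Fd d n (π - θ)) := by
      apply intervalIntegral.integral_lt_integral_of_continuousOn_of_le_of_exists_lt
        Real.pi_pos
      · exact (by fun_prop : Continuous fun θ : ℝ => 2 * Real.sin θ ^ n).continuousOn
      · exact (hcont.add hcont').continuousOn
      · exact fun x hx => aux_key_s9 hd n (Real.sin_nonneg_of_nonneg_of_le_pi hx.1.le hx.2)
      · refine ⟨π / 2, ⟨by positivity, by linarith [Real.pi_pos]⟩, ?_⟩
        have hpi2 : π - π / 2 = π / 2 := by ring
        have hs := aux_s_pos hd (π / 2)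
        have hslt : Real.sqrt (1 - d ^ 2 * Real.sin (π / 2) ^ 2) < 1 := by
          have h := Real.sqrt_lt_sqrt (aux_arg_pos hd (π / 2)).le
            (show 1 - d ^ 2 * Real.sin (π / 2) ^ 2 < 1 by
              rw [Real.sin_pi_div_two]; nlinarith)
          simpa using h
        set s := Real.sqrt (1 - d ^ 2 * Real.sin (π / 2) ^ 2) with hsdef
        have hFval : Fd d n (π / 2) = 1 / s ^ n := by
          rw [Fd, ← hsdef, Real.sin_pi_div_two, Real.cos_pi_div_two, one_pow,
            mul_zero, zero_add, ← pow_succ, Nat.sub_add_cancel hn]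
        have hsn : s ^ n < 1 := pow_lt_one₀ hs.le hslt (by omega)
        rw [hpi2, hFval, Real.sin_pi_div_two, one_pow, mul_one]
        rw [← add_div, lt_div_iff₀ (pow_pos hs n)]
        nlinarith
    rw [hsum, intervalIntegral.integral_const_mul] at hstrict
    rw [hFeq] at heq
    linarith
  · intro h
    subst h
    apply intervalIntegral.integral_congr
    intro x _
    norm_num
end

section
/- Let n ≥ 2 be an integer. The function H : [0,1) → ℝ defined by H(d) = ∫₀^π sinⁿ(θ)/(1 + d·cos θ)^{n−1} dθ is strictly increasing; in particular H(d) > H(0) = ∫₀^π sinⁿ(θ) dθ for every d ∈ (0,1). -/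
open Real

lemma N_le (m : ℕ) {s t : ℝ} (hs : 0 ≤ s) (hst : s ≤ t) :
    (1 - s) ^ m + (1 + s) ^ m ≤ (1 - t) ^ m + (1 + t) ^ m := by
  have expand : ∀ x : ℝ, (1 - x) ^ m + (1 + x) ^ m
      = ∑ k ∈ Finset.range (m + 1), ((-x) ^ k + x ^ k) * (m.choose k : ℝ) := by
    intro x
    rw [show (1 - x : ℝ) = -x + 1 by ring, show (1 + x : ℝ) = x + 1 by ring,
      add_pow, add_pow, ← Finset.sum_add_distrib]
    exact Finset.sum_congr rfl fun k _ => by ring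
  rw [expand, expand]
  apply Finset.sum_le_sum
  intro k _
  apply mul_le_mul_of_nonneg_right _ (by positivity)
  rcases Nat.even_or_odd k with hk | hk
  · rw [hk.neg_pow, hk.neg_pow]
    have := pow_le_pow_left₀ hs hst k
    linarith
  · rw [hk.neg_pow, hk.neg_pow]; simp

lemma phi_lt (m : ℕ) (hm : 1 ≤ m) {s t : ℝ} (hs : 0 ≤ s) (hst : s < t) (ht : t < 1) :
    1 / (1 + s) ^ m + 1 / (1 - s) ^ m < 1 / (1 + t) ^ m + 1 / (1 - t) ^ m := by
  have h1s : (0:ℝ) < 1 - s := by linarith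
  have h1t : (0:ℝ) < 1 - t := by linarith
  have h2s : (0:ℝ) < 1 + s := by linarith
  have h2t : (0:ℝ) < 1 + t := by linarith
  have rwphi : ∀ x : ℝ, 0 ≤ x → x < 1 →
      1 / (1 + x) ^ m + 1 / (1 - x) ^ m = ((1 - x) ^ m + (1 + x) ^ m) / (1 - x ^ 2) ^ m := by
    intro x h0 h1
    have hx1 : (1 + x : ℝ) ≠ 0 := by positivity
    have hx2 : (1 - x : ℝ) ≠ 0 := by linarith
    rw [div_add_div _ _ (pow_ne_zero m hx1) (pow_ne_zero m hx2), one_mul, mul_one, ← mul_pow]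
    congr 2
    ring
  rw [rwphi s hs (hst.trans ht), rwphi t (hs.trans hst.le) ht]
  have hDs : (0:ℝ) < (1 - s ^ 2) ^ m := by
    apply pow_pos; nlinarith
  have hDt : (0:ℝ) < (1 - t ^ 2) ^ m := by
    apply pow_pos; nlinarith
  have hDlt : (1 - t ^ 2) ^ m < (1 - s ^ 2) ^ m := by
    apply pow_lt_pow_left₀ (by nlinarith) (by nlinarith) (by omega)
  have hNpos : (0:ℝ) < (1 - s) ^ m + (1 + s) ^ m := by positivity
  calc ((1 - s) ^ m + (1 + s) ^ m) / (1 - s ^ 2) ^ m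
      < ((1 - s) ^ m + (1 + s) ^ m) / (1 - t ^ 2) ^ m :=
        div_lt_div_of_pos_left hNpos hDt hDlt
    _ ≤ ((1 - t) ^ m + (1 + t) ^ m) / (1 - t ^ 2) ^ m := by
        exact div_le_div_of_nonneg_right (N_le m hs hst.le) hDt.le

lemma cont_aux (n m : ℕ) {d : ℝ} (hd : d ∈ Set.Ico (0:ℝ) 1) :
    Continuous (fun θ : ℝ => Real.sin θ ^ n / (1 + d * Real.cos θ) ^ m) := by
  apply Continuous.div (by continuity) (by continuity)
  intro θ
  apply pow_ne_zero
  have h : |d * Real.cos θ| < 1 := by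
    rw [abs_mul]
    calc |d| * |Real.cos θ| ≤ |d| * 1 := by
          gcongr; exact Real.abs_cos_le_one θ
      _ = |d| := mul_one _
      _ < 1 := by rw [abs_of_nonneg hd.1]; exact hd.2
  have := (abs_lt.mp h).1
  intro hzero
  rw [show d * Real.cos θ = -1 by linarith] at this
  linarith

/-- For `n ≥ 2`, the function `H(d) = ∫₀^π sinⁿθ/(1 + d·cos θ)^{n−1} dθ` is strictly
increasing on `[0,1)`; in particular `H(d) > H(0) = ∫₀^π sinⁿθ dθ` for `d ∈ (0,1)`. -/
theorem stmt_10 (n : ℕ) (hn : 2 ≤ n) :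
    StrictMonoOn (fun d : ℝ => ∫ θ in (0:ℝ)..π,
        Real.sin θ ^ n / (1 + d * Real.cos θ) ^ (n - 1)) (Set.Ico (0:ℝ) 1) ∧
    ∀ d ∈ Set.Ioo (0:ℝ) 1,
      (∫ θ in (0:ℝ)..π, Real.sin θ ^ n) <
        ∫ θ in (0:ℝ)..π, Real.sin θ ^ n / (1 + d * Real.cos θ) ^ (n - 1) := by
  set m := n - 1 with hmdef
  have hm1 : 1 ≤ m := by omega
  set F : ℝ → ℝ → ℝ := fun d θ => Real.sin θ ^ n / (1 + d * Real.cos θ) ^ m with hF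
  have split : ∀ d ∈ Set.Ico (0:ℝ) 1,
      (∫ θ in (0:ℝ)..π, F d θ) = ∫ θ in (0:ℝ)..π/2, (F d θ + F d (π - θ)) := by
    intro d hd
    have hc : Continuous (F d) := cont_aux n m hd
    have hc2 : Continuous (fun θ => F d (π - θ)) := hc.comp (by continuity)
    have h1 : (∫ θ in (0:ℝ)..π, F d θ)
        = (∫ θ in (0:ℝ)..π/2, F d θ) + ∫ θ in (π/2)..π, F d θ :=
      (intervalIntegral.integral_add_adjacent_intervals
        (hc.intervalIntegrable _ _) (hc.intervalIntegrable _ _)).symm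
    have h2 : (∫ θ in (0:ℝ)..π/2, F d (π - θ)) = ∫ θ in (π/2)..π, F d θ := by
      rw [intervalIntegral.integral_comp_sub_left (F d) π, sub_half, sub_zero]
    rw [h1, ← h2,
      intervalIntegral.integral_add (hc.intervalIntegrable _ _) (hc2.intervalIntegrable _ _)]
  have hmono : StrictMonoOn (fun d : ℝ => ∫ θ in (0:ℝ)..π, F d θ) (Set.Ico (0:ℝ) 1) := by
    intro d₁ hd₁ d₂ hd₂ h12
    simp only
    rw [split d₁ hd₁, split d₂ hd₂]
    have hcdiff : Continuous (fun θ =>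
        (F d₂ θ + F d₂ (π - θ)) - (F d₁ θ + F d₁ (π - θ))) := by
      have c1 := cont_aux n m hd₁
      have c2 := cont_aux n m hd₂
      exact ((c2.add (c2.comp (by continuity))).sub (c1.add (c1.comp (by continuity))))
    have hpos : 0 < ∫ θ in (0:ℝ)..π/2,
        ((F d₂ θ + F d₂ (π - θ)) - (F d₁ θ + F d₁ (π - θ))) := by
      apply intervalIntegral.intervalIntegral_pos_of_pos_on
        (hcdiff.intervalIntegrable _ _) _ (by linarith [Real.pi_pos])
      intro θ hθ
      have hsin : 0 < Real.sin θ :=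
        Real.sin_pos_of_pos_of_lt_pi hθ.1 (by linarith [hθ.2, Real.pi_pos])
      have hcos : 0 < Real.cos θ :=
        Real.cos_pos_of_mem_Ioo ⟨by linarith [hθ.1, Real.pi_pos], hθ.2⟩
      have hcos1 : Real.cos θ ≤ 1 := Real.cos_le_one θ
      have key := phi_lt m hm1 (s := d₁ * Real.cos θ) (t := d₂ * Real.cos θ)
        (mul_nonneg hd₁.1 hcos.le)
        (mul_lt_mul_of_pos_right h12 hcos)
        (by nlinarith [hd₂.2, hd₂.1])
      have hsp : 0 < Real.sin θ ^ n := pow_pos hsin n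
      have key2 := mul_lt_mul_of_pos_left key hsp
      simp only [hF, Real.sin_pi_sub, Real.cos_pi_sub]
      rw [mul_add, mul_add, mul_one_div, mul_one_div, mul_one_div, mul_one_div] at key2
      have e1 : (1 + d₁ * -Real.cos θ) = 1 - d₁ * Real.cos θ := by ring
      have e2 : (1 + d₂ * -Real.cos θ) = 1 - d₂ * Real.cos θ := by ring
      rw [e1, e2]
      linarith
    have hint : ∀ d ∈ Set.Ico (0:ℝ) 1, IntervalIntegrable
        (fun θ => F d θ + F d (π - θ)) MeasureTheory.volume 0 (π/2) := by
      intro d hd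
      have hc := cont_aux n m hd
      exact (hc.add (hc.comp (by continuity))).intervalIntegrable _ _
    rw [intervalIntegral.integral_sub (hint d₂ hd₂) (hint d₁ hd₁)] at hpos
    linarith
  refine ⟨hmono, ?_⟩
  intro d hd
  have h0 : (0:ℝ) ∈ Set.Ico (0:ℝ) 1 := ⟨le_refl _, one_pos⟩
  have hd' : d ∈ Set.Ico (0:ℝ) 1 := ⟨hd.1.le, hd.2⟩
  have := hmono h0 hd' hd.1
  simpa [hF] using this
end

section
/- Let I_p = ∫₀^π sin^p(t) dt for p ∈ ℕ. Then for every x ∈ (0,1), the series ∑_{n=1}^∞ (1/n)·I_{2n}·x^{2n} converges and ∑_{n=1}^∞ (1/n)·I_{2n}·x^{2n} = −2π·ln( (√(1 − x²) + 1)/2 ). -/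
open Real Filter MeasureTheory intervalIntegral


lemma denom_pos {a : ℝ} (ha : 0 ≤ a) (ha1 : a < 1) (t : ℝ) : 0 < 1 - a * Real.sin t ^ 2 := by
  nlinarith [Real.sin_sq_le_one t, sq_nonneg (Real.sin t)]

lemma keyIntegral {a : ℝ} (ha : 0 ≤ a) (ha1 : a < 1) :
    ∫ t in (0:ℝ)..π, (1 - a * Real.sin t ^ 2)⁻¹ = π / Real.sqrt (1 - a) := by
  set c := Real.sqrt (1 - a) with hc
  have hcpos : 0 < c := Real.sqrt_pos.mpr (by linarith)
  have hc2 : c ^ 2 = 1 - a := Real.sq_sqrt (by linarith)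
  set f : ℝ → ℝ := fun t => (1 - a * Real.sin t ^ 2)⁻¹ with hf
  have hfc : Continuous f := by
    apply Continuous.inv₀ (by continuity)
    intro t; exact ne_of_gt (denom_pos ha ha1 t)
  -- FTC on [0, b] for b < π/2
  have ftc : ∀ b ∈ Set.Ico (0:ℝ) (π/2), ∫ t in (0:ℝ)..b, f t = Real.arctan (c * Real.tan b) / c := by
    intro b hb
    have key : ∀ t ∈ Set.uIcc (0:ℝ) b, HasDerivAt (fun t => Real.arctan (c * Real.tan t) / c) (f t) t := by
      intro t ht
      rw [Set.uIcc_of_le hb.1] at ht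
      have hcos : 0 < Real.cos t :=
        Real.cos_pos_of_mem_Ioo ⟨by linarith [ht.1, Real.pi_pos], lt_of_le_of_lt ht.2 hb.2⟩
      have h1 : HasDerivAt Real.tan (1 / Real.cos t ^ 2) t := Real.hasDerivAt_tan hcos.ne'
      have h2 : HasDerivAt (fun t => c * Real.tan t) (c * (1 / Real.cos t ^ 2)) t := h1.const_mul c
      have h3 := (Real.hasDerivAt_arctan (c * Real.tan t)).comp t h2
      have h4 := h3.div_const c
      convert h4 using 1
      · rfl
      · rfl
      · rfl
      have hcos2 : Real.cos t ^ 2 ≠ 0 := pow_ne_zero 2 hcos.ne'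
      have hsc : Real.sin t ^ 2 = 1 - Real.cos t ^ 2 := by
        have := Real.sin_sq_add_cos_sq t; linarith
      have hd := (denom_pos ha ha1 t).ne'
      rw [hf, Real.tan_eq_sin_div_cos]
      field_simp
      linear_combination (Real.sin t ^ 2) * hc2 + (Real.sin_sq_add_cos_sq t)
    rw [intervalIntegral.integral_eq_sub_of_hasDerivAt key (hfc.intervalIntegrable 0 b)]
    simp
  -- limit b → π/2⁻
  have hint : ∀ u v : ℝ, IntervalIntegrable f volume u v := fun u v => hfc.intervalIntegrable u v
  have hcont : Continuous fun b => ∫ t in (0:ℝ)..b, f t :=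
    intervalIntegral.continuous_primitive hint 0
  have hlim1 : Tendsto (fun b => ∫ t in (0:ℝ)..b, f t) (nhdsWithin (π/2) (Set.Iio (π/2)))
      (nhds (∫ t in (0:ℝ)..(π/2), f t)) :=
    (hcont.tendsto _).mono_left nhdsWithin_le_nhds
  have hlim2 : Tendsto (fun b => Real.arctan (c * Real.tan b) / c) (nhdsWithin (π/2) (Set.Iio (π/2)))
      (nhds ((π/2) / c)) := by
    have h1 : Tendsto (fun b => c * Real.tan b) (nhdsWithin (π/2) (Set.Iio (π/2))) atTop :=
      (Real.tendsto_tan_pi_div_two).const_mul_atTop hcpos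
    have h2 : Tendsto (fun b => Real.arctan (c * Real.tan b)) (nhdsWithin (π/2) (Set.Iio (π/2))) (nhds (π/2)) :=
      (tendsto_nhds_of_tendsto_nhdsWithin Real.tendsto_arctan_atTop).comp h1
    exact h2.div_const c
  have heq : (fun b => ∫ t in (0:ℝ)..b, f t) =ᶠ[nhdsWithin (π/2) (Set.Iio (π/2))]
      (fun b => Real.arctan (c * Real.tan b) / c) := by
    filter_upwards [Ioo_mem_nhdsLT_of_mem (Set.right_mem_Ioc.mpr (by positivity : (0:ℝ) < π/2))]
      with b hb
    exact ftc b ⟨hb.1.le, hb.2⟩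
  have hhalf : ∫ t in (0:ℝ)..(π/2), f t = (π/2) / c :=
    tendsto_nhds_unique hlim1 (hlim2.congr' heq.symm)
  -- symmetry
  have hsym : ∫ t in (π/2)..π, f t = ∫ t in (0:ℝ)..(π/2), f t := by
    have := intervalIntegral.integral_comp_sub_left f π (a := 0) (b := π/2)
    rw [show π - π/2 = π/2 by ring, show π - (0:ℝ) = π by ring] at this
    rw [← this]
    apply intervalIntegral.integral_congr
    intro t _
    simp [hf, Real.sin_pi_sub]
  have := intervalIntegral.integral_add_adjacent_intervals (hint 0 (π/2)) (hint (π/2) π)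
  rw [← this, hhalf, hsym, hhalf]
  field_simp
  ring


lemma I2n_nonneg (n : ℕ) : 0 ≤ ∫ t in (0:ℝ)..π, Real.sin t ^ (2*n) := by
  apply intervalIntegral.integral_nonneg Real.pi_pos.le
  intro t _
  rw [pow_mul]
  positivity

lemma I2n_le_pi (n : ℕ) : (∫ t in (0:ℝ)..π, Real.sin t ^ (2*n)) ≤ π := by
  have h : (∫ t in (0:ℝ)..π, Real.sin t ^ (2*n)) ≤ ∫ _ in (0:ℝ)..π, (1:ℝ) := by
    apply intervalIntegral.integral_mono_on Real.pi_pos.le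
      ((Continuous.pow (by continuity) _).intervalIntegrable 0 π)
      (intervalIntegrable_const)
    intro t _
    rw [pow_mul]
    exact pow_le_one₀ (sq_nonneg _) (Real.sin_sq_le_one t)
  simpa using h

lemma hasSumI {u : ℝ} (hu0 : 0 ≤ u) (hu1 : u < 1) :
    HasSum (fun n : ℕ => (∫ t in (0:ℝ)..π, Real.sin t ^ (2*n)) * u ^ (2*n))
      (π / Real.sqrt (1 - u^2)) := by
  have hu2 : u^2 < 1 := by nlinarith
  have hu2' : 0 ≤ u^2 := sq_nonneg u
  have key := keyIntegral hu2' hu2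
  rw [← key]
  have hswap : HasSum (fun n : ℕ => ∫ t in (0:ℝ)..π, Real.sin t ^ (2*n) * u ^ (2*n))
      (∫ t in (0:ℝ)..π, (1 - u^2 * Real.sin t ^ 2)⁻¹) := by
    apply intervalIntegral.hasSum_integral_of_dominated_convergence
      (bound := fun n _ => u ^ (2*n))
    · intro n
      exact (Continuous.aestronglyMeasurable (by continuity))
    · intro n
      filter_upwards with t _
      rw [Real.norm_eq_abs, abs_mul, abs_pow, abs_pow]
      calc |Real.sin t| ^ (2*n) * |u| ^ (2*n)
          ≤ 1 ^ (2*n) * |u| ^ (2*n) := by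
            gcongr; exact Real.abs_sin_le_one t
        _ = u ^ (2*n) := by
            rw [one_pow, one_mul, pow_mul, pow_mul, sq_abs]
    · filter_upwards with t _
      have : Summable fun n : ℕ => (u^2)^n := summable_geometric_of_lt_one hu2' hu2
      simpa [pow_mul] using this
    · exact intervalIntegrable_const
    · filter_upwards with t _
      have hr0 : 0 ≤ u^2 * Real.sin t ^ 2 := by positivity
      have hr1 : u^2 * Real.sin t ^ 2 < 1 := by
        nlinarith [Real.sin_sq_le_one t, sq_nonneg (Real.sin t)]
      have := hasSum_geometric_of_lt_one hr0 hr1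
      convert this using 2 with n
      · rfl
      rw [pow_mul, pow_mul, mul_pow]
      ring
  convert hswap using 2 with n
  exact (intervalIntegral.integral_mul_const _ _).symm


noncomputable def g (u : ℝ) : ℝ :=
  2 * π * u / (Real.sqrt (1 - u^2) * (Real.sqrt (1 - u^2) + 1))

lemma step4 {x : ℝ} (hx : x ∈ Set.Ioo (0:ℝ) 1) :
    HasSum (fun n : ℕ =>
        (∫ t in (0:ℝ)..π, Real.sin t ^ (2*(n+1))) * x ^ (2*(n+1)) / (n+1))
      (∫ u in (0:ℝ)..x, g u) := by
  obtain ⟨hx0, hx1⟩ := hx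
  have hswap : HasSum (fun n : ℕ =>
      ∫ u in (0:ℝ)..x, 2 * (∫ t in (0:ℝ)..π, Real.sin t ^ (2*(n+1))) * u ^ (2*n+1))
      (∫ u in (0:ℝ)..x, g u) := by
    apply intervalIntegral.hasSum_integral_of_dominated_convergence
      (bound := fun n _ => 2 * π * x ^ (2*n+1))
    · intro n
      exact (Continuous.aestronglyMeasurable (by continuity))
    · intro n
      filter_upwards with u hu
      rw [Set.uIoc_of_le hx0.le] at hu
      rw [Real.norm_eq_abs, abs_mul, abs_mul]
      have h1 : |(2:ℝ)| = 2 := by norm_num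
      have h2 : |∫ t in (0:ℝ)..π, Real.sin t ^ (2*(n+1))| ≤ π := by
        rw [abs_of_nonneg (I2n_nonneg (n+1))]; exact I2n_le_pi (n+1)
      have h3 : |u ^ (2*n+1)| ≤ x ^ (2*n+1) := by
        rw [abs_pow, abs_of_nonneg hu.1.le]
        exact pow_le_pow_left₀ hu.1.le hu.2 _
      rw [h1]
      exact mul_le_mul (mul_le_mul_of_nonneg_left h2 (by norm_num)) h3 (abs_nonneg _)
        (by positivity)
    · filter_upwards with u _
      have : Summable fun n : ℕ => (2 * π * x) * (x^2)^n := 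
        (summable_geometric_of_lt_one (sq_nonneg x) (by nlinarith)).mul_left _
      apply this.congr
      intro n
      rw [pow_add, pow_mul, pow_one]
      ring
    · exact intervalIntegrable_const
    · filter_upwards with u hu
      rw [Set.uIoc_of_le hx0.le] at hu
      have hu0 : 0 < u := hu.1
      have hu1 : u < 1 := lt_of_le_of_lt hu.2 hx1
      have hs : 0 < Real.sqrt (1 - u^2) := Real.sqrt_pos.mpr (by nlinarith)
      have hs2 : Real.sqrt (1 - u^2) ^ 2 = 1 - u^2 := Real.sq_sqrt (by nlinarith)
      have base := hasSumI hu0.le hu1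
      have hshift : HasSum (fun n : ℕ =>
          (∫ t in (0:ℝ)..π, Real.sin t ^ (2*(n+1))) * u ^ (2*(n+1)))
          (π / Real.sqrt (1 - u^2) - π) := by
        have h0 : (∫ t in (0:ℝ)..π, Real.sin t ^ (2*0)) * u ^ (2*0) = π := by
          norm_num
        rw [← hasSum_nat_add_iff' 1] at base
        simpa [h0] using base
      have := hshift.mul_left (2 / u)
      convert this using 1
      · rfl
      · funext n
        field_simp
        ring
      · unfold g
        rw [div_mul_eq_mul_div, mul_sub]
        field_simp
        linear_combination hs2
  convert hswap using 2 with n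
  rw [intervalIntegral.integral_const_mul, integral_pow]
  have : (n:ℝ) + 1 ≠ 0 := by positivity
  field_simp
  push_cast
  ring



lemma step5 {x : ℝ} (hx : x ∈ Set.Ioo (0:ℝ) 1) :
    ∫ u in (0:ℝ)..x, g u = -(2 * π * Real.log ((Real.sqrt (1 - x ^ 2) + 1) / 2)) := by
  obtain ⟨hx0, hx1⟩ := hx
  set G : ℝ → ℝ := fun u => -(2 * π * Real.log ((Real.sqrt (1 - u ^ 2) + 1) / 2)) with hG
  have hderiv : ∀ u ∈ Set.uIcc (0:ℝ) x, HasDerivAt G (g u) u := by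
    intro u hu
    rw [Set.uIcc_of_le hx0.le] at hu
    have h1u : 0 < 1 - u^2 := by nlinarith [hu.1, lt_of_le_of_lt hu.2 hx1]
    have hs : 0 < Real.sqrt (1 - u^2) := Real.sqrt_pos.mpr h1u
    have hs2 : Real.sqrt (1 - u^2) ^ 2 = 1 - u^2 := Real.sq_sqrt h1u.le
    have h1 : HasDerivAt (fun u : ℝ => 1 - u^2) (-(2*u)) u := by
      simpa using ((hasDerivAt_pow 2 u).const_sub 1)
    have h2 : HasDerivAt (fun u : ℝ => Real.sqrt (1 - u^2))
        (-(2*u) / (2 * Real.sqrt (1 - u^2))) u := h1.sqrt h1u.ne'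
    have h3 : HasDerivAt (fun u : ℝ => (Real.sqrt (1 - u^2) + 1) / 2)
        ((-(2*u) / (2 * Real.sqrt (1 - u^2))) / 2) u := (h2.add_const 1).div_const 2
    have hw : (Real.sqrt (1 - u^2) + 1) / 2 ≠ 0 := by positivity
    have h4 := h3.log hw
    have h5 := (h4.const_mul (2 * π)).neg
    convert h5 using 1
    · rfl
    · rfl
    · rfl
    unfold g
    field_simp
  have hint : IntervalIntegrable g volume 0 x := by
    apply ContinuousOn.intervalIntegrable
    apply ContinuousOn.div
    · fun_prop
    · apply ContinuousOn.mul
      · apply ContinuousOn.sqrt; fun_prop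
      · apply ContinuousOn.add
        · apply ContinuousOn.sqrt; fun_prop
        · fun_prop
    · intro u hu
      rw [Set.uIcc_of_le hx0.le] at hu
      have h1u : 0 < 1 - u^2 := by nlinarith [hu.1, lt_of_le_of_lt hu.2 hx1]
      have hs : 0 < Real.sqrt (1 - u^2) := Real.sqrt_pos.mpr h1u
      positivity
  rw [intervalIntegral.integral_eq_sub_of_hasDerivAt hderiv hint]
  have : G 0 = 0 := by simp [hG]
  rw [this, sub_zero]

/-- With `I_p = ∫₀^π sin^p(t) dt`, for every `x ∈ (0,1)` the series
`∑_{n≥1} (1/n)·I_{2n}·x^{2n}` converges with sum `−2π·ln((√(1 − x²) + 1)/2)`.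
(The `n = 0` term of the summand below vanishes since `1/0 = 0` in `ℝ`.) -/
theorem stmt_13 (x : ℝ) (hx : x ∈ Set.Ioo (0:ℝ) 1) :
    HasSum (fun n : ℕ =>
        (1 / (n : ℝ)) * (∫ t in (0:ℝ)..π, Real.sin t ^ (2 * n)) * x ^ (2 * n))
      (-(2 * π * Real.log ((Real.sqrt (1 - x ^ 2) + 1) / 2))) := by
  have h4 := step4 hx
  rw [step5 hx] at h4
  set f : ℕ → ℝ := fun n =>
    (1 / (n : ℝ)) * (∫ t in (0:ℝ)..π, Real.sin t ^ (2 * n)) * x ^ (2 * n) with hf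
  rw [← hasSum_nat_add_iff' 1]
  have h0 : ∑ i ∈ Finset.range 1, f i = 0 := by simp [hf]
  rw [h0, sub_zero]
  apply h4.congr_fun
  intro n
  have : ((n:ℝ) + 1) ≠ 0 := by positivity
  simp only [hf]
  push_cast
  field_simp
end

section
/- For every d ∈ (0,1), with I_p = ∫₀^π sin^p(t) dt, one has ∑_{n=1}^∞ (1/n)·I_{2n}·(2d/(1+d²))^{2n} = 2π·ln(1 + d²). -/
open Real



noncomputable def cb (n : ℕ) : ℝ := (Nat.centralBinom n : ℝ)

lemma cb_pos (n : ℕ) : 0 < cb n := by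
  unfold cb; exact_mod_cast Nat.centralBinom_pos n

lemma cb_zero : cb 0 = 1 := by simp [cb, Nat.centralBinom]

lemma cb_one : cb 1 = 2 := by
  have : Nat.centralBinom 1 = 2 := rfl
  simp [cb, this]

lemma cb_rec (n : ℕ) : ((n : ℝ) + 1) * cb (n + 1) = (4 * n + 2) * cb n := by
  have h := Nat.succ_mul_centralBinom_succ n
  have h2 : (((n + 1) * Nat.centralBinom (n + 1) : ℕ) : ℝ)
      = ((2 * (2 * n + 1) * Nat.centralBinom n : ℕ) : ℝ) := by exact_mod_cast congrArg (Nat.cast (R := ℝ)) h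
  push_cast at h2
  unfold cb; linarith

lemma cb_le (n : ℕ) : cb n ≤ 4 ^ n := by
  induction n with
  | zero => simp [cb_zero]
  | succ n ih =>
    have hrec := cb_rec n
    have hn1 : (0:ℝ) < (n:ℝ) + 1 := by positivity
    have h1 : cb (n+1) ≤ 4 * cb n := by nlinarith [cb_pos n]
    calc cb (n+1) ≤ 4 * cb n := h1
      _ ≤ 4 * 4 ^ n := by nlinarith
      _ = 4 ^ (n+1) := by ring

lemma wallis_prod (n : ℕ) :
    ∏ i ∈ Finset.range n, (2 * (i : ℝ) + 1) / (2 * i + 2) = cb n / 4 ^ n := by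
  induction n with
  | zero => simp [cb_zero]
  | succ n ih =>
    rw [Finset.prod_range_succ, ih]
    have hrec := cb_rec n
    have h1 : (0:ℝ) < (n:ℝ) + 1 := by positivity
    have h4 : (0:ℝ) < (4:ℝ) ^ n := by positivity
    field_simp
    linear_combination (-2*(4:ℝ)^n) * hrec

lemma wallis (n : ℕ) : (∫ t in (0:ℝ)..π, Real.sin t ^ (2 * n)) = π * cb n / 4 ^ n := by
  rw [integral_sin_pow_even, wallis_prod]
  ring

noncomputable def Tf (y : ℝ) : ℝ := ∑' n : ℕ, cb n * y ^ n
noncomputable def Df (y : ℝ) : ℝ := ∑' n : ℕ, cb n * ((n : ℝ) * y ^ (n - 1))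
noncomputable def Sf (y : ℝ) : ℝ := ∑' n : ℕ, (1 / (n : ℝ) * cb n) * y ^ n
noncomputable def Ef (y : ℝ) : ℝ := ∑' n : ℕ, (1 / (n : ℝ) * cb n) * ((n : ℝ) * y ^ (n - 1))

lemma bound_T {r y : ℝ} (hy : |y| ≤ r) (n : ℕ) : |cb n * y ^ n| ≤ (4 * r) ^ n := by
  have hr0 : 0 ≤ r := le_trans (abs_nonneg y) hy
  rw [abs_mul, abs_of_pos (cb_pos n), abs_pow, mul_pow]
  exact mul_le_mul (cb_le n) (pow_le_pow_left₀ (abs_nonneg y) hy n) (by positivity) (by positivity)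

lemma bound_S {r y : ℝ} (hy : |y| ≤ r) (n : ℕ) : |(1 / (n : ℝ) * cb n) * y ^ n| ≤ (4 * r) ^ n := by
  have h := bound_T hy n
  calc |(1 / (n : ℝ) * cb n) * y ^ n| = |1 / (n : ℝ)| * |cb n * y ^ n| := by
        rw [← abs_mul]; ring_nf
    _ ≤ 1 * |cb n * y ^ n| := by
        apply mul_le_mul_of_nonneg_right _ (abs_nonneg _)
        rcases Nat.eq_zero_or_pos n with h0 | h0
        · simp [h0]
        · rw [abs_of_nonneg (by positivity)]
          rw [div_le_one (by exact_mod_cast h0)]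
          exact_mod_cast Nat.one_le_cast.mpr h0
    _ ≤ (4 * r) ^ n := by rw [one_mul]; exact h

lemma bound_nT {r y : ℝ} (hy : |y| ≤ r) (n : ℕ) :
    |(n : ℝ) * (cb n * y ^ n)| ≤ (n : ℝ) * (4 * r) ^ n := by
  rw [abs_mul, abs_of_nonneg (by positivity : (0:ℝ) ≤ (n:ℝ))]
  exact mul_le_mul_of_nonneg_left (bound_T hy n) (by positivity)

lemma key_pow {r : ℝ} (hr0 : 0 < r) (m : ℕ) : (4:ℝ) ^ (m+1) * r ^ m = (4*r) ^ (m+1) / r := by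
  rw [mul_pow]; field_simp; ring

lemma bound_D {r y : ℝ} (hr0 : 0 < r) (hy : |y| ≤ r) (n : ℕ) :
    |cb n * ((n : ℝ) * y ^ (n - 1))| ≤ (n : ℝ) * (4 * r) ^ n / r := by
  cases n with
  | zero => simp
  | succ m =>
    have h1 : |y| ^ m ≤ r ^ m := pow_le_pow_left₀ (abs_nonneg y) hy m
    rw [Nat.add_sub_cancel, abs_mul, abs_of_pos (cb_pos _), abs_mul, abs_pow, Nat.abs_cast]
    push_cast
    calc cb (m+1) * (((m:ℝ)+1) * |y| ^ m) ≤ 4 ^ (m+1) * (((m:ℝ)+1) * r ^ m) := by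
          apply mul_le_mul (cb_le _) _ (by positivity) (by positivity)
          exact mul_le_mul_of_nonneg_left h1 (by positivity)
      _ = ((m:ℝ)+1) * (4 ^ (m+1) * r ^ m) := by ring
      _ = ((m:ℝ)+1) * ((4*r) ^ (m+1) / r) := by rw [key_pow hr0]
      _ = ((m:ℝ)+1) * (4*r) ^ (m+1) / r := by ring

lemma bound_E {r y : ℝ} (hr0 : 0 < r) (hy : |y| ≤ r) (n : ℕ) :
    |(1 / (n : ℝ) * cb n) * ((n : ℝ) * y ^ (n - 1))| ≤ (n : ℝ) * (4 * r) ^ n / r := by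
  calc |(1 / (n : ℝ) * cb n) * ((n : ℝ) * y ^ (n - 1))|
      = |1 / (n:ℝ)| * |cb n * ((n : ℝ) * y ^ (n - 1))| := by rw [← abs_mul]; ring_nf
    _ ≤ 1 * |cb n * ((n : ℝ) * y ^ (n - 1))| := by
        apply mul_le_mul_of_nonneg_right _ (abs_nonneg _)
        rcases Nat.eq_zero_or_pos n with h0 | h0
        · simp [h0]
        · rw [abs_of_nonneg (by positivity), div_le_one (by exact_mod_cast h0)]
          exact_mod_cast Nat.one_le_cast.mpr h0
    _ ≤ (n : ℝ) * (4 * r) ^ n / r := by rw [one_mul]; exact bound_D hr0 hy n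

lemma summ_u {r : ℝ} (hr0 : 0 < r) (hr : 4 * r < 1) :
    Summable (fun n : ℕ => (n : ℝ) * (4 * r) ^ n / r) := by
  have h : ‖4 * r‖ < 1 := by rw [Real.norm_eq_abs, abs_of_pos (by positivity)]; exact hr
  have := summable_pow_mul_geometric_of_norm_lt_one (R := ℝ) 1 h
  simpa [pow_one] using this.div_const r

lemma summ_geom {r : ℝ} (hr0 : 0 < r) (hr : 4 * r < 1) :
    Summable (fun n : ℕ => (4 * r) ^ n) :=
  summable_geometric_of_lt_one (by positivity) hr

lemma pick_r {y : ℝ} (hy : |y| < 1/4) : ∃ r, 0 < r ∧ 4*r < 1 ∧ |y| < r :=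
  ⟨(|y| + 1/4)/2, by positivity, by linarith [abs_nonneg y], by linarith⟩

lemma summ_T {y : ℝ} (hy : |y| < 1/4) : Summable (fun n : ℕ => cb n * y ^ n) := by
  obtain ⟨r, hr0, hr1, hyr⟩ := pick_r hy
  exact (summ_geom hr0 hr1).of_norm_bounded (fun n => by
    simpa only [Real.norm_eq_abs] using bound_T hyr.le n)

lemma summ_S {y : ℝ} (hy : |y| < 1/4) :
    Summable (fun n : ℕ => (1 / (n : ℝ) * cb n) * y ^ n) := by
  obtain ⟨r, hr0, hr1, hyr⟩ := pick_r hy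
  exact (summ_geom hr0 hr1).of_norm_bounded (fun n => by
    simpa only [Real.norm_eq_abs] using bound_S hyr.le n)

lemma summ_D {y : ℝ} (hy : |y| < 1/4) :
    Summable (fun n : ℕ => cb n * ((n : ℝ) * y ^ (n - 1))) := by
  obtain ⟨r, hr0, hr1, hyr⟩ := pick_r hy
  exact (summ_u hr0 hr1).of_norm_bounded (fun n => by
    simpa only [Real.norm_eq_abs] using bound_D hr0 hyr.le n)

lemma summ_E {y : ℝ} (hy : |y| < 1/4) :
    Summable (fun n : ℕ => (1 / (n : ℝ) * cb n) * ((n : ℝ) * y ^ (n - 1))) := by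
  obtain ⟨r, hr0, hr1, hyr⟩ := pick_r hy
  exact (summ_u hr0 hr1).of_norm_bounded (fun n => by
    simpa only [Real.norm_eq_abs] using bound_E hr0 hyr.le n)

lemma summ_nT {y : ℝ} (hy : |y| < 1/4) :
    Summable (fun n : ℕ => (n : ℝ) * (cb n * y ^ n)) := by
  obtain ⟨r, hr0, hr1, hyr⟩ := pick_r hy
  have h : ‖4 * r‖ < 1 := by rw [Real.norm_eq_abs, abs_of_pos (by positivity)]; exact hr1
  have hs : Summable (fun n : ℕ => (n : ℝ) * (4*r) ^ n) := by
    simpa [pow_one] using summable_pow_mul_geometric_of_norm_lt_one (R := ℝ) 1 h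
  exact hs.of_norm_bounded (fun n => by
    simpa only [Real.norm_eq_abs] using bound_nT hyr.le n)

lemma summ_zero_base : Summable (fun n : ℕ => cb n * (0:ℝ) ^ n) := by
  apply summable_of_ne_finset_zero (s := {0})
  intro n hn
  simp only [Finset.mem_singleton] at hn
  simp [zero_pow hn]

lemma summ_zero_base' : Summable (fun n : ℕ => (1 / (n : ℝ) * cb n) * (0:ℝ) ^ n) := by
  apply summable_of_ne_finset_zero (s := {0})
  intro n hn
  simp only [Finset.mem_singleton] at hn
  simp [zero_pow hn]

lemma hasDerivAt_Tf {y : ℝ} (hy : |y| < 1/4) : HasDerivAt Tf (Df y) y := by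
  obtain ⟨r, hr0, hr1, hyr⟩ := pick_r hy
  exact hasDerivAt_tsum_of_isPreconnected (summ_u hr0 hr1) isOpen_Ioo
    (isPreconnected_Ioo (a := -r) (b := r))
    (fun n z _ => (hasDerivAt_pow n z).const_mul (cb n))
    (fun n z hz => by
      simpa only [Real.norm_eq_abs] using bound_D hr0 (abs_le.mpr ⟨hz.1.le, hz.2.le⟩) n)
    (Set.mem_Ioo.mpr ⟨by linarith, hr0⟩) summ_zero_base
    (Set.mem_Ioo.mpr ⟨by cases abs_lt.mp hyr; linarith, (abs_lt.mp hyr).2⟩)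

lemma hasDerivAt_Sf {y : ℝ} (hy : |y| < 1/4) : HasDerivAt Sf (Ef y) y := by
  obtain ⟨r, hr0, hr1, hyr⟩ := pick_r hy
  exact hasDerivAt_tsum_of_isPreconnected (summ_u hr0 hr1) isOpen_Ioo
    (isPreconnected_Ioo (a := -r) (b := r))
    (fun n z _ => (hasDerivAt_pow n z).const_mul (1 / (n : ℝ) * cb n))
    (fun n z hz => by
      simpa only [Real.norm_eq_abs] using bound_E hr0 (abs_le.mpr ⟨hz.1.le, hz.2.le⟩) n)
    (Set.mem_Ioo.mpr ⟨by linarith, hr0⟩) summ_zero_base'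
    (Set.mem_Ioo.mpr ⟨by cases abs_lt.mp hyr; linarith, (abs_lt.mp hyr).2⟩)

lemma Tf_zero : Tf 0 = 1 := by
  rw [Tf, tsum_eq_single 0 (fun n hn => by simp [zero_pow hn])]
  simp [cb_zero]

lemma Sf_zero : Sf 0 = 0 := by
  rw [Sf, tsum_eq_single 0 (fun n hn => by simp [zero_pow hn])]
  simp

lemma Ef_zero : Ef 0 = 2 := by
  rw [Ef, tsum_eq_single 1 ?_]
  · norm_num [cb_one]
  · intro n hn
    match n with
    | 0 => simp
    | (m+1) =>
      have hm : m ≠ 0 := by omega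
      simp [Nat.add_sub_cancel, zero_pow hm]

lemma Tf_ode {y : ℝ} (hy : |y| < 1/4) : (1 - 4*y) * Df y = 2 * Tf y := by
  have hsD := summ_D hy
  have hsT := summ_T hy
  have hsnT := summ_nT hy
  have hA : y * Df y = ∑' n : ℕ, (n:ℝ) * (cb n * y ^ n) := by
    rw [Df, ← tsum_mul_left]
    apply tsum_congr
    intro n
    cases n with
    | zero => simp
    | succ m => rw [Nat.add_sub_cancel]; push_cast; ring
  have hB : Df y = ∑' n : ℕ, ((4*(n:ℝ)+2) * (cb n * y ^ n)) := by
    rw [Df, Summable.tsum_eq_zero_add hsD]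
    simp only [Nat.cast_zero, zero_mul, mul_zero, zero_add, Nat.add_sub_cancel]
    apply tsum_congr
    intro n
    have h := cb_rec n
    push_cast
    linear_combination y ^ n * h
  have hC : ∑' n : ℕ, ((4*(n:ℝ)+2) * (cb n * y ^ n)) = 4 * (y * Df y) + 2 * Tf y := by
    rw [hA, Tf, ← tsum_mul_left, ← tsum_mul_left,
      ← Summable.tsum_add (hsnT.mul_left 4) (hsT.mul_left 2)]
    apply tsum_congr
    intro n
    ring
  linear_combination hB.trans hC

lemma Ef_eq {y : ℝ} (hy : |y| < 1/4) : y * Ef y = Tf y - 1 := by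
  have hsE := summ_E hy
  have hsT := summ_T hy
  have hsyE := hsE.mul_left y
  have h1 : y * Ef y = ∑' n : ℕ, y * ((1 / (n : ℝ) * cb n) * ((n : ℝ) * y ^ (n - 1))) := by
    rw [Ef, tsum_mul_left]
  have hT' : Tf y = 1 + ∑' n : ℕ, cb (n+1) * y ^ (n+1) := by
    rw [Tf, Summable.tsum_eq_zero_add hsT]
    simp [cb_zero]
  rw [h1, Summable.tsum_eq_zero_add hsyE, hT']
  simp only [Nat.cast_zero, zero_mul, mul_zero, zero_add, Nat.add_sub_cancel]
  have : ∀ n : ℕ, y * ((1 / ((n:ℝ) + 1) * cb (n+1)) * (((n:ℝ) + 1) * y ^ n))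
      = cb (n+1) * y ^ (n+1) := by
    intro n
    have hne : ((n:ℝ) + 1) ≠ 0 := by positivity
    field_simp
    ring
  calc (∑' n : ℕ, y * ((1 / (↑(n+1) : ℝ) * cb (n+1)) * ((↑(n+1) : ℝ) * y ^ n)))
      = ∑' n : ℕ, cb (n+1) * y ^ (n+1) := by
        apply tsum_congr; intro n; push_cast; exact this n
    _ = 1 + (∑' n : ℕ, cb (n+1) * y ^ (n+1)) - 1 := by ring

noncomputable def Rf (y : ℝ) : ℝ := -(2 * Real.log ((1 + Real.sqrt (1 - 4*y))/2))

lemma hasDerivAt_Rf {x : ℝ} (hx : x < 1/4) :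
    HasDerivAt Rf (4 / (Real.sqrt (1-4*x) * (1 + Real.sqrt (1-4*x)))) x := by
  have hu : 0 < 1 - 4*x := by linarith
  have hsu : 0 < Real.sqrt (1-4*x) := Real.sqrt_pos.mpr hu
  have h1 : HasDerivAt (fun z : ℝ => 1 - 4*z) (-4) x := by
    simpa using ((hasDerivAt_id x).const_mul (4:ℝ)).const_sub 1
  have h2 : HasDerivAt (fun z => Real.sqrt (1-4*z)) (1/(2*Real.sqrt (1-4*x)) * (-4)) x :=
    (Real.hasDerivAt_sqrt hu.ne').comp x h1
  have h3 : HasDerivAt (fun z => (1 + Real.sqrt (1-4*z))/2)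
      ((1/(2*Real.sqrt (1-4*x)) * (-4))/2) x := (h2.const_add 1).div_const 2
  have hw : (1 + Real.sqrt (1-4*x))/2 ≠ 0 := by positivity
  have h4 := (Real.hasDerivAt_log hw).comp x h3
  have h5 := h4.const_mul (-2 : ℝ)
  have hfun : Rf = fun z => (-2 : ℝ) * Real.log ((1 + Real.sqrt (1-4*z))/2) := by
    funext z; rw [Rf]; ring
  rw [hfun]
  have h1s : (0:ℝ) < 1 + Real.sqrt (1-4*x) := by positivity
  have hne1 : (1:ℝ) + Real.sqrt (1-4*x) ≠ 0 := h1s.ne'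
  refine h5.congr_deriv ?_
  field_simp

lemma Tf_sq {y₀ : ℝ} (h0 : 0 ≤ y₀) (h4 : y₀ < 1/4) :
    ∀ y ∈ Set.Icc 0 y₀, Tf y ^ 2 * (1 - 4*y) = 1 := by
  have hmem : ∀ x ∈ Set.Icc (0:ℝ) y₀, |x| < 1/4 := fun x hx => by
    rw [abs_of_nonneg hx.1]; linarith [hx.2]
  have hone : HasDerivAt (fun z : ℝ => 1 - 4*z) (-4) 0 := by
    simpa using ((hasDerivAt_id (0:ℝ)).const_mul (4:ℝ)).const_sub 1
  apply eq_of_has_deriv_right_eq (f := fun y => Tf y ^ 2 * (1 - 4*y)) (f' := fun _ => 0)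
    (g := fun _ => 1)
  · intro x hx
    have hq : |x| < 1/4 := hmem x (Set.mem_Icc.mpr ⟨hx.1, hx.2.le⟩)
    have hT := hasDerivAt_Tf hq
    have h1 : HasDerivAt (fun z : ℝ => 1 - 4*z) (-4) x := by
      simpa using ((hasDerivAt_id x).const_mul (4:ℝ)).const_sub 1
    have hF := (hT.pow 2).mul h1
    have hode := Tf_ode hq
    have hzero : ((2:ℕ) : ℝ) * Tf x ^ (2-1) * Df x * (1 - 4*x) + Tf x ^ 2 * (-4) = 0 := by
      push_cast
      linear_combination (2 * Tf x) * hode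
    rw [Pi.pow_apply, hzero] at hF
    exact hF.hasDerivWithinAt
  · intro x hx
    exact (hasDerivWithinAt_const x _ 1)
  · intro x hx
    have hq : |x| < 1/4 := hmem x hx
    exact ((((hasDerivAt_Tf hq).continuousAt.pow 2).mul (by fun_prop)).continuousWithinAt)
  · exact continuousOn_const
  · rw [Tf_zero]; norm_num

lemma Tf_nonneg {y : ℝ} (hy : 0 ≤ y) : 0 ≤ Tf y :=
  tsum_nonneg fun n => mul_nonneg (cb_pos n).le (pow_nonneg hy n)

lemma Sf_eq_Rf {y₀ : ℝ} (h0 : 0 ≤ y₀) (h4 : y₀ < 1/4) :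
    ∀ y ∈ Set.Icc 0 y₀, Sf y = Rf y := by
  have hmem : ∀ x ∈ Set.Icc (0:ℝ) y₀, |x| < 1/4 := fun x hx => by
    rw [abs_of_nonneg hx.1]; linarith [hx.2]
  apply eq_of_has_deriv_right_eq (f := Sf) (f' := fun x => Ef x) (g := Rf)
  · intro x hx
    have hq : |x| < 1/4 := hmem x (Set.mem_Icc.mpr ⟨hx.1, hx.2.le⟩)
    exact (hasDerivAt_Sf hq).hasDerivWithinAt
  · intro x hx
    have hq : |x| < 1/4 := hmem x (Set.mem_Icc.mpr ⟨hx.1, hx.2.le⟩)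
    have hx4 : x < 1/4 := by cases abs_lt.mp hq; linarith
    have hR := hasDerivAt_Rf hx4
    have hval : Ef x = 4 / (Real.sqrt (1-4*x) * (1 + Real.sqrt (1-4*x))) := by
      rcases eq_or_lt_of_le hx.1 with h0x | h0x
      · rw [← h0x]
        norm_num [Ef_zero, Real.sqrt_one]
      · have hu : 0 < 1 - 4*x := by linarith
        have hsu : 0 < Real.sqrt (1-4*x) := Real.sqrt_pos.mpr hu
        have hsq : Real.sqrt (1-4*x) ^ 2 = 1 - 4*x := Real.sq_sqrt hu.le
        have hTsq := Tf_sq h0 h4 x (Set.mem_Icc.mpr ⟨hx.1, hx.2.le⟩)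
        have hTnn : 0 ≤ Tf x := Tf_nonneg hx.1
        have hTx : Tf x = 1 / Real.sqrt (1-4*x) := by
          have h2 : Tf x ^ 2 = 1/(1-4*x) := by field_simp; linarith [hTsq]
          have h3 : Real.sqrt (Tf x ^ 2) = Tf x := Real.sqrt_sq hTnn
          rw [← h3, h2, one_div, one_div, Real.sqrt_inv]
        have hEx : x * Ef x = Tf x - 1 := Ef_eq hq
        have hxne : x ≠ 0 := h0x.ne'
        have hEx2 : Ef x = (1 / Real.sqrt (1-4*x) - 1) / x := by
          rw [← hTx]; field_simp; linarith [hEx]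
        have h1s : (0:ℝ) < 1 + Real.sqrt (1-4*x) := by positivity
        rw [hEx2, div_eq_div_iff hxne (mul_pos hsu h1s).ne']
        field_simp
        nlinarith [hsq, hsu]
    rw [hval]
    exact hR.hasDerivWithinAt
  · intro x hx
    have hq : |x| < 1/4 := hmem x hx
    exact (hasDerivAt_Sf hq).continuousAt.continuousWithinAt
  · intro x hx
    have hq : |x| < 1/4 := hmem x hx
    have hx4 : x < 1/4 := by cases abs_lt.mp hq; linarith
    exact (hasDerivAt_Rf hx4).continuousAt.continuousWithinAt
  · rw [Sf_zero, Rf]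
    norm_num

/-- With `I_p = ∫₀^π sin^p(t) dt`, for every `d ∈ (0,1)`,
`∑_{n≥1} (1/n)·I_{2n}·(2d/(1+d²))^{2n} = 2π·ln(1 + d²)`.
(The `n = 0` term of the summand below vanishes since `1/0 = 0` in `ℝ`.) -/
theorem stmt_14 (d : ℝ) (hd : d ∈ Set.Ioo (0:ℝ) 1) :
    HasSum (fun n : ℕ =>
        (1 / (n : ℝ)) * (∫ t in (0:ℝ)..π, Real.sin t ^ (2 * n)) *
          (2 * d / (1 + d ^ 2)) ^ (2 * n))
      (2 * π * Real.log (1 + d ^ 2)) := by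
  obtain ⟨hd0, hd1⟩ := hd
  have hden : (0:ℝ) < 1 + d^2 := by positivity
  set y₀ : ℝ := d^2/(1+d^2)^2 with hy₀def
  have hy₀pos : 0 < y₀ := by positivity
  have hd2 : d^2 < 1 := by nlinarith
  have hy₀lt : y₀ < 1/4 := by
    rw [hy₀def, div_lt_iff₀ (by positivity)]
    have h1 : (0:ℝ) < (1 - d^2)^2 := pow_pos (by linarith) 2
    nlinarith
  have hy₀q : |y₀| < 1/4 := by rw [abs_of_pos hy₀pos]; exact hy₀lt
  have hsum := (summ_S hy₀q).hasSum
  have hx2 : (2*d/(1+d^2))^2 = 4*y₀ := by rw [hy₀def]; field_simp; ring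
  have hS := Sf_eq_Rf hy₀pos.le hy₀lt y₀ (Set.mem_Icc.mpr ⟨hy₀pos.le, le_refl _⟩)
  have hsqrt : Real.sqrt (1 - 4*y₀) = (1-d^2)/(1+d^2) := by
    have h1 : 1 - 4*y₀ = ((1-d^2)/(1+d^2))^2 := by rw [hy₀def]; field_simp; ring
    rw [h1, Real.sqrt_sq (div_nonneg (by nlinarith) hden.le)]
  have hRval : Rf y₀ = 2 * Real.log (1+d^2) := by
    rw [Rf, hsqrt]
    have h2 : (1 + (1-d^2)/(1+d^2))/2 = (1+d^2)⁻¹ := by field_simp; ring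
    rw [h2, Real.log_inv]; ring
  have hfinal := hsum.mul_left π
  have hval : π * Sf y₀ = 2 * π * Real.log (1+d^2) := by rw [Sf, ← Sf, hS, hRval]; ring
  have hfun : (fun n : ℕ => (1/(n:ℝ)) * (∫ t in (0:ℝ)..π, Real.sin t ^ (2*n)) *
      (2*d/(1+d^2))^(2*n)) = fun n : ℕ => π * ((1/(n:ℝ) * cb n) * y₀^n) := by
    funext n
    rw [wallis n, pow_mul, hx2, mul_pow]
    have h4 : ((4:ℝ))^n ≠ 0 := by positivity
    calc (1/(n:ℝ)) * (π * cb n / 4^n) * (4^n * y₀^n)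
        = π * ((1/(n:ℝ) * cb n) * y₀^n) * (4^n/4^n) := by ring
      _ = π * ((1/(n:ℝ) * cb n) * y₀^n) := by rw [div_self h4, mul_one]
  rw [hfun, ← hval]
  exact hfinal
end

section
/- Let n ≥ 2 be an integer, a ∈ (0,1) and k ≥ 1 an integer. Define A_k = a − a^{2k+n−1}, B_k = −( (k+n−2)·a^{2k+n−1} + k·a^{2k+n−2} + k·a + k+n−2 ), and C_k = (k+n−2)·k·(1 − a^{2k+n−2}). Then the discriminant Δ_k = B_k² − 4·A_k·C_k satisfies Δ_k ≥ ((k+n−2) − k·a)² > 0. -/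
open Real

/-- For `n ≥ 2`, `a ∈ (0,1)`, `k ≥ 1`, with
`A_k = a − a^{2k+n−1}`, `B_k = −((k+n−2)·a^{2k+n−1} + k·a^{2k+n−2} + k·a + (k+n−2))`,
`C_k = (k+n−2)·k·(1 − a^{2k+n−2})`, the discriminant `Δ_k = B_k² − 4·A_k·C_k`
satisfies `Δ_k ≥ ((k+n−2) − k·a)² > 0`. -/
theorem stmt_15 (n k : ℕ) (hn : 2 ≤ n) (hk : 1 ≤ k) (a : ℝ) (ha : a ∈ Set.Ioo (0:ℝ) 1) :
    (((k : ℝ) + n - 2) - k * a) ^ 2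
      ≤ (-((((k : ℝ) + n - 2) * a ^ (2 * k + n - 1) + k * a ^ (2 * k + n - 2)
            + k * a + ((k : ℝ) + n - 2)))) ^ 2
        - 4 * (a - a ^ (2 * k + n - 1)) * (((k : ℝ) + n - 2) * k * (1 - a ^ (2 * k + n - 2))) ∧
    0 < (((k : ℝ) + n - 2) - k * a) ^ 2 := by
  obtain ⟨ha0, ha1⟩ := ha
  have hk1 : (1:ℝ) ≤ (k:ℝ) := by exact_mod_cast hk
  have hn2 : (2:ℝ) ≤ (n:ℝ) := by exact_mod_cast hn
  have hm : (k:ℝ) ≤ (k:ℝ) + n - 2 := by linarith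
  have hdiff : (0:ℝ) < ((k:ℝ) + n - 2) - k * a := by nlinarith
  have hpow : 2 * k + n - 1 = (2 * k + n - 2) + 1 := by omega
  rw [hpow]
  have hps : a ^ (2 * k + n - 2 + 1) = a ^ (2 * k + n - 2) * a := pow_succ a _
  rw [hps]
  set t : ℝ := a ^ (2 * k + n - 2) with ht
  have ht0 : 0 < t := pow_pos ha0 _
  have ht1 : t ≤ 1 := pow_le_one₀ ha0.le ha1.le
  set m : ℝ := (k:ℝ) + n - 2 with hmdef
  constructor
  · nlinarith [sq_nonneg (t * (m * a - k)), mul_pos (mul_pos ht0 (by nlinarith : (0:ℝ) < m * a + k)) (by nlinarith : (0:ℝ) < k * a + m), mul_pos (mul_pos (mul_pos (by nlinarith : (0:ℝ) < m) (by linarith : (0:ℝ) < (k:ℝ))) ha0) ht0]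
  · positivity
end

section
/- Let n ≥ 2 be an integer, a ∈ (0,1) and k ≥ 1 an integer. With A_k = a − a^{2k+n−1}, B_k = −( (k+n−2)·a^{2k+n−1} + k·a^{2k+n−2} + k·a + k+n−2 ), and C_k = (k+n−2)·k·(1 − a^{2k+n−2}), the quadratic equation A_k·δ² + B_k·δ + C_k = 0 has exactly two real roots δ_k^{(1)} = (−B_k − √(B_k² − 4A_kC_k))/(2A_k) and δ_k^{(2)} = (−B_k + √(B_k² − 4A_kC_k))/(2A_k), and they satisfy 0 < δ_k^{(1)} < δ_k^{(2)}. -/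
open Real

set_option maxHeartbeats 1000000

/-- For `n ≥ 2`, `a ∈ (0,1)`, `k ≥ 1`, with
`A_k = a − a^{2k+n−1}`, `B_k = −((k+n−2)·a^{2k+n−1} + k·a^{2k+n−2} + k·a + (k+n−2))`,
`C_k = (k+n−2)·k·(1 − a^{2k+n−2})`, the quadratic `A_k·δ² + B_k·δ + C_k = 0` has
exactly the two real roots `δ_k^{(1)} = (−B_k − √(B_k² − 4A_kC_k))/(2A_k)` and
`δ_k^{(2)} = (−B_k + √(B_k² − 4A_kC_k))/(2A_k)`, with `0 < δ_k^{(1)} < δ_k^{(2)}`. -/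
theorem stmt_16 (n k : ℕ) (hn : 2 ≤ n) (hk : 1 ≤ k) (a : ℝ) (ha : a ∈ Set.Ioo (0:ℝ) 1)
    (A B C δ₁ δ₂ : ℝ)
    (hA : A = a - a ^ (2 * k + n - 1))
    (hB : B = -(((k : ℝ) + n - 2) * a ^ (2 * k + n - 1) + k * a ^ (2 * k + n - 2)
        + k * a + ((k : ℝ) + n - 2)))
    (hC : C = ((k : ℝ) + n - 2) * k * (1 - a ^ (2 * k + n - 2)))
    (hδ₁ : δ₁ = (-B - Real.sqrt (B ^ 2 - 4 * A * C)) / (2 * A))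
    (hδ₂ : δ₂ = (-B + Real.sqrt (B ^ 2 - 4 * A * C)) / (2 * A)) :
    0 < δ₁ ∧ δ₁ < δ₂ ∧ ∀ δ : ℝ, A * δ ^ 2 + B * δ + C = 0 ↔ δ = δ₁ ∨ δ = δ₂ := by
  obtain ⟨ha0, ha1⟩ := ha
  -- rewrite exponents
  have hm1 : 2 * k + n - 1 = (2 * k + n - 2) + 1 := by omega
  set m := 2 * k + n - 2 with hmdef
  have hmpos : 0 < m := by omega
  set t : ℝ := a ^ m with htdef
  have ht0 : 0 < t := pow_pos ha0 m
  have ht1 : t < 1 := pow_lt_one₀ ha0.le ha1 (by omega)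
  set K : ℝ := (k : ℝ) with hKdef
  set L : ℝ := (k : ℝ) + n - 2 with hLdef
  have hK1 : 1 ≤ K := by rw [hKdef]; exact_mod_cast hk
  have hL1 : 1 ≤ L := by
    have h2 : (2:ℝ) ≤ (n:ℝ) := by exact_mod_cast hn
    have h1 : (1:ℝ) ≤ (k:ℝ) := by exact_mod_cast hk
    rw [hLdef]; linarith
  clear_value t K L
  have hA' : A = a * (1 - t) := by rw [hA, hm1, pow_succ, ← htdef]; ring
  have hB' : B = -(L * (a * t) + K * t + K * a + L) := by rw [hB, hm1, pow_succ, ← htdef]; ring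
  have hC' : C = L * K * (1 - t) := by rw [hC]
  have hKpos : 0 < K := by linarith
  have hLpos : 0 < L := by linarith
  have hApos : 0 < A := by rw [hA']; nlinarith
  have hCpos : 0 < C := by rw [hC']; exact mul_pos (mul_pos hLpos hKpos) (by linarith)
  have hBneg : B < 0 := by
    rw [hB']
    nlinarith [mul_pos (mul_pos hLpos ha0) ht0, mul_pos hKpos ht0, mul_pos hKpos ha0]
  have hDid : B ^ 2 - 4 * A * C
      = (L - L * (a * t) - K * a + K * t) ^ 2 + 4 * (L + K) ^ 2 * (a * t) := by
    rw [hA', hB', hC']; ring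
  have hDpos : 0 < B ^ 2 - 4 * A * C := by
    rw [hDid]
    have h1 : 0 < 4 * (L + K) ^ 2 * (a * t) := by
      have : 0 < (L + K) ^ 2 := by positivity
      have := mul_pos ha0 ht0
      nlinarith
    nlinarith [sq_nonneg (L - L * (a * t) - K * a + K * t)]
  set s : ℝ := Real.sqrt (B ^ 2 - 4 * A * C) with hsdef
  have hs2 : s ^ 2 = B ^ 2 - 4 * A * C := Real.sq_sqrt hDpos.le
  have hspos : 0 < s := Real.sqrt_pos.mpr hDpos
  clear_value s
  have hsltB : s < -B := by
    have h1 : s ^ 2 < (-B) ^ 2 := by nlinarith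
    have h2 : (0:ℝ) < -B := by linarith
    nlinarith
  have hAne : A ≠ 0 := ne_of_gt hApos
  refine ⟨?_, ?_, ?_⟩
  · rw [hδ₁]
    apply div_pos (by linarith) (by linarith)
  · rw [hδ₁, hδ₂]
    have h2A : (0:ℝ) < 2 * A := by linarith
    exact div_lt_div_of_pos_right (by linarith) h2A
  · intro δ
    have hfac : A * δ ^ 2 + B * δ + C = A * (δ - δ₁) * (δ - δ₂) := by
      rw [hδ₁, hδ₂]
      field_simp
      linear_combination hs2
    rw [hfac]
    constructor
    · intro h
      rcases mul_eq_zero.mp h with h' | h'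
      · rcases mul_eq_zero.mp h' with h'' | h''
        · exact absurd h'' hAne
        · exact Or.inl (sub_eq_zero.mp h'')
      · exact Or.inr (sub_eq_zero.mp h')
    · rintro (rfl | rfl) <;> simp
end

section
/- Let n ≥ 3 be an integer and a ∈ (0,1). For each integer k ≥ 1, define A_k = a − a^{2k+n−1}, B_k = −( (k+n−2)·a^{2k+n−1} + k·a^{2k+n−2} + k·a + k+n−2 ), C_k = (k+n−2)·k·(1 − a^{2k+n−2}), and δ_k^{(1)} = 2·C_k/( −B_k + √(B_k² − 4·A_k·C_k) ). Then the sequence (δ_k^{(1)})_{k≥1} is strictly increasing. -/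
open Real

private lemma pow_aux17 (a : ℝ) (ha0 : 0 < a) (ha1 : a < 1) :
    ∀ P : ℕ, a ^ (P + 1) * (1 + ((P : ℝ) + 1) * (1 - a)) ≤ 1 := by
  intro P
  induction P with
  | zero => push_cast; nlinarith [sq_nonneg (1 - a)]
  | succ P ih =>
    push_cast at ih ⊢
    rw [pow_succ]
    have hb : a ^ (P + 1) * a ≤ 1 := by
      have h := pow_le_one₀ ha0.le ha1.le (n := P + 2)
      rwa [pow_succ] at h
    have h1 : a * (a ^ (P + 1) * (1 + ((P : ℝ) + 1) * (1 - a))) ≤ a * 1 :=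
      mul_le_mul_of_nonneg_left ih ha0.le
    have h2 : a ^ (P + 1) * a * (1 - a) ≤ 1 * (1 - a) :=
      mul_le_mul_of_nonneg_right hb (by linarith)
    nlinarith [h1, h2]

private lemma L_bound17 (a : ℝ) (ha0 : 0 < a) (ha1 : a < 1) :
    ∀ P : ℕ, 2 * a * (1 - a ^ P) ≤ (P : ℝ) * (1 - a) * (1 + a ^ (P + 1)) := by
  intro P
  induction P with
  | zero => norm_num
  | succ P ih =>
    have hs := pow_aux17 a ha0 ha1 P
    have e1 : a ^ (P + 1) = a ^ P * a := pow_succ a P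
    rw [e1] at ih hs
    have h2 : 0 ≤ (1 - a) * (1 - a ^ P * a * (1 + ((P : ℝ) + 1) * (1 - a))) :=
      mul_nonneg (by linarith) (by linarith)
    push_cast
    rw [show P + 1 + 1 = P + 2 from rfl, show a ^ (P + 2) = a ^ P * a * a from by
      rw [pow_succ, pow_succ], e1]
    nlinarith [ih, h2]


set_option maxHeartbeats 1000000 in
private lemma core17 (a K c t A1 B1 C1 A2 B2 C2 : ℝ)
    (ha0 : 0 < a) (ha1 : a < 1) (hK : 1 ≤ K) (hc : 0 ≤ c)
    (ht0 : 0 < t) (ht1 : t < 1)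
    (hL : 2 * a * (1 - t) ≤ (2 * K + c + 1) * (1 - a) * (1 + t * a))
    (hA1 : A1 = a - t * a)
    (hB1 : B1 = -((K + c + 1) * (t * a) + K * t + K * a + (K + c + 1)))
    (hC1 : C1 = (K + c + 1) * K * (1 - t))
    (hA2 : A2 = a - t * a ^ 3)
    (hB2 : B2 = -((K + c + 2) * (t * a ^ 3) + (K + 1) * (t * a ^ 2) + (K + 1) * a + (K + c + 2)))
    (hC2 : C2 = (K + c + 2) * (K + 1) * (1 - t * a ^ 2)) :
    2 * C1 / (-B1 + Real.sqrt (B1 ^ 2 - 4 * A1 * C1)) <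
      2 * C2 / (-B2 + Real.sqrt (B2 ^ 2 - 4 * A2 * C2)) := by
  have hK0 : (0:ℝ) < K := by linarith
  have ha1t : (0:ℝ) < 1 - t := by linarith
  have ha2lt : a ^ 2 < 1 := by
    linarith only [mul_lt_mul_of_pos_left ha1 ha0, ha1, sq_nonneg a, sq_abs a, sq a ▸ le_refl (a^2)]
  have hta2 : t * a ^ 2 < 1 := by
    linarith only [mul_lt_mul_of_pos_left ha2lt ht0, ht1]
  have hta0 : 0 < t * a := mul_pos ht0 ha0
  have hA1p : 0 < A1 := by
    rw [hA1]; linarith only [mul_pos ha0 ha1t]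
  have hA2p : 0 < A2 := by
    rw [hA2]; linarith only [mul_pos ha0 (show (0:ℝ) < 1 - t * a ^ 2 by linarith only [hta2])]
  have hC1p : 0 < C1 := by
    rw [hC1]; exact mul_pos (mul_pos (by linarith) hK0) (by linarith)
  have hC2p : 0 < C2 := by
    rw [hC2]; exact mul_pos (mul_pos (by linarith) (by linarith)) (by linarith)
  have hB1n : 0 < -B1 := by
    rw [hB1]
    linarith only [mul_pos (show (0:ℝ) < K + c + 1 by linarith) hta0,
      mul_pos hK0 ht0, mul_pos hK0 ha0, hK0, hc]
  have hB2n : 0 < -B2 := by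
    rw [hB2]
    linarith only [mul_pos (show (0:ℝ) < K + c + 2 by linarith)
        (mul_pos ht0 (pow_pos ha0 3)),
      mul_pos (show (0:ℝ) < K + 1 by linarith) (mul_pos ht0 (pow_pos ha0 2)),
      mul_pos (show (0:ℝ) < K + 1 by linarith) ha0, hK0, hc]
  have hD1 : 0 < B1 ^ 2 - 4 * A1 * C1 := by
    have hid : B1 ^ 2 - 4 * A1 * C1
        = ((K + c + 1) * (t * a + 1) - K * (t + a)) ^ 2
          + 4 * ((K + c + 1) * K) * t * (1 + a) ^ 2 := by
      rw [hA1, hB1, hC1]; ring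
    rw [hid]
    have h2 : 0 < ((K + c + 1) * K * t) * (1 + a) ^ 2 :=
      mul_pos (mul_pos (mul_pos (by linarith) hK0) ht0) (by positivity)
    linarith only [sq_nonneg ((K + c + 1) * (t * a + 1) - K * (t + a)), h2]
  have hD2 : 0 < B2 ^ 2 - 4 * A2 * C2 := by
    have hid : B2 ^ 2 - 4 * A2 * C2
        = ((K + c + 2) * (t * a ^ 3 + 1) - (K + 1) * (t * a ^ 2 + a)) ^ 2
          + 4 * ((K + c + 2) * (K + 1)) * (t * a ^ 2) * (1 + a) ^ 2 := by
      rw [hA2, hB2, hC2]; ring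
    rw [hid]
    have h2 : 0 < ((K + c + 2) * (K + 1) * (t * a ^ 2)) * (1 + a) ^ 2 :=
      mul_pos (mul_pos (mul_pos (by linarith) (by linarith))
        (mul_pos ht0 (pow_pos ha0 2))) (by positivity)
    linarith only [sq_nonneg ((K + c + 2) * (t * a ^ 3 + 1) - (K + 1) * (t * a ^ 2 + a)), h2]
  obtain ⟨s1, hs1def⟩ : ∃ x, x = Real.sqrt (B1 ^ 2 - 4 * A1 * C1) := ⟨_, rfl⟩
  obtain ⟨s2, hs2def⟩ : ∃ x, x = Real.sqrt (B2 ^ 2 - 4 * A2 * C2) := ⟨_, rfl⟩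
  rw [← hs1def, ← hs2def]
  have hs1 : s1 ^ 2 = B1 ^ 2 - 4 * A1 * C1 := by rw [hs1def]; exact Real.sq_sqrt hD1.le
  have hs1p : 0 < s1 := by rw [hs1def]; exact Real.sqrt_pos.mpr hD1
  have hs2 : s2 ^ 2 = B2 ^ 2 - 4 * A2 * C2 := by rw [hs2def]; exact Real.sq_sqrt hD2.le
  have hs2p : 0 < s2 := by rw [hs2def]; exact Real.sqrt_pos.mpr hD2
  clear hs1def hs2def
  have hden1 : 0 < -B1 + s1 := by linarith
  have hden2 : 0 < -B2 + s2 := by linarith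
  obtain ⟨d, hddef⟩ : ∃ x, x = 2 * C1 / (-B1 + s1) := ⟨_, rfl⟩
  rw [← hddef]
  have hdp : 0 < d := by rw [hddef]; exact div_pos (by linarith) hden1
  have h4 : d * (-B1 + s1) = 2 * C1 := by
    rw [hddef]; exact div_mul_cancel₀ _ hden1.ne'
  clear hddef
  have hroot : A1 * d ^ 2 + B1 * d + C1 = 0 := by
    have h5 : (s1 * d) ^ 2 = (2 * C1 + B1 * d) ^ 2 := by
      have h : s1 * d = 2 * C1 + B1 * d := by linear_combination h4
      rw [h]
    have h6 : C1 * (A1 * d ^ 2 + B1 * d + C1) = 0 := by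
      linear_combination (-1/4) * h5 + (d ^ 2 / 4) * hs1
    exact (mul_eq_zero.mp h6).resolve_left hC1p.ne'
  have hdK : d < K := by
    have hqK : A1 * K ^ 2 + B1 * K + C1 < 0 := by
      have he : A1 * K ^ 2 + B1 * K + C1 = -(K * t * (1 + a) * (2 * K + c + 1)) := by
        rw [hA1, hB1, hC1]; ring
      rw [he]
      have : 0 < K * t * (1 + a) * (2 * K + c + 1) :=
        mul_pos (mul_pos (mul_pos hK0 ht0) (by linarith)) (by linarith)
      linarith
    have h2 : 2 * C1 + K * B1 < K * s1 := by
      rcases le_or_gt (2 * C1 + K * B1) 0 with h | h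
      · linarith only [mul_pos hK0 hs1p, h]
      · have he : (K * s1) ^ 2 - (2 * C1 + K * B1) ^ 2
            = -4 * C1 * (A1 * K ^ 2 + B1 * K + C1) := by
          linear_combination K ^ 2 * hs1
        have hsq : (2 * C1 + K * B1) ^ 2 < (K * s1) ^ 2 := by
          linarith only [he,
            mul_pos hC1p (show 0 < -(A1 * K ^ 2 + B1 * K + C1) by linarith only [hqK])]
        exact lt_of_pow_lt_pow_left₀ 2 (mul_pos hK0 hs1p).le hsq
    have h3 : d * (-B1 + s1) < K * (-B1 + s1) := by linarith only [h4, h2]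
    exact lt_of_mul_lt_mul_right h3 hden1.le
  have hq2 : 0 < A2 * d ^ 2 + B2 * d + C2 := by
    have key0 : A1 * (A2 * d ^ 2 + B2 * d + C2)
        = A2 * (A1 * d ^ 2 + B1 * d + C1)
          + a * (d * ((1 + a) * (a ^ 2 * t ^ 2 - 1 + (2 * K + c + 2) * t * (1 - a ^ 2)))
            + (1 - t) * (1 - a ^ 2 * t) * (2 * K + c + 2)) := by
      rw [hA1, hB1, hC1, hA2, hB2, hC2]; ring
    have hcpos : 0 < (1 - t) * (1 - a ^ 2 * t) * (2 * K + c + 2) :=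
      mul_pos (mul_pos ha1t
        (by linarith only [mul_lt_mul_of_pos_left ha2lt ht0, ht1])) (by linarith)
    have hF : 0 < K * ((1 + a) * (a ^ 2 * t ^ 2 - 1 + (2 * K + c + 2) * t * (1 - a ^ 2)))
        + (1 - t) * (1 - a ^ 2 * t) * (2 * K + c + 2) := by
      have hI : (1 - (t * a) ^ 2) - (2 * K + c + 2) * t * (1 + a) * (1 - a)
          ≤ (1 - t * a ^ 2) * ((1 - t) - (2 * K + c + 1) * t * (1 - a)) := by
        linarith only [mul_nonneg (mul_nonneg ht0.le ha0.le) (sub_nonneg.mpr hL)]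
      have hX : K * (1 + a) * ((1 - (t * a) ^ 2) - (2 * K + c + 2) * t * (1 + a) * (1 - a))
          ≤ K * (1 + a) * ((1 - t * a ^ 2) * ((1 - t) - (2 * K + c + 1) * t * (1 - a))) :=
        mul_le_mul_of_nonneg_left hI (by linarith only [mul_pos hK0 ha0, hK0])
      have hfin : K * (1 + a) * ((1 - t * a ^ 2) * ((1 - t) - (2 * K + c + 1) * t * (1 - a)))
          < (2 * K + c + 2) * (1 - t) * (1 - t * a ^ 2) := by
        have h1 : 0 < (1 - t * a ^ 2) * (((2 * K + c + 2) - K * (1 + a)) * (1 - t)) :=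
          mul_pos (by linarith)
            (mul_pos (by linarith only [mul_pos hK0 (show (0:ℝ) < 1 - a by linarith), hc])
              (by linarith))
        have h2 : 0 ≤ K * (1 + a) * (2 * K + c + 1) * t * ((1 - a) * (1 - t * a ^ 2)) :=
          mul_nonneg (mul_nonneg (mul_nonneg (mul_nonneg hK0.le (by linarith))
            (by linarith)) ht0.le)
            (mul_nonneg (by linarith) (by linarith))
        linarith only [h1, h2]
      linarith only [hX, hfin]
    rcases le_or_gt 0 ((1 + a) * (a ^ 2 * t ^ 2 - 1 + (2 * K + c + 2) * t * (1 - a ^ 2)))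
      with hE | hE
    · have h7 : 0 < A1 * (A2 * d ^ 2 + B2 * d + C2) := by
        rw [key0, hroot]
        linarith only [mul_nonneg ha0.le (mul_nonneg hdp.le hE), mul_pos ha0 hcpos]
      rcases mul_pos_iff.mp h7 with ⟨_, h⟩ | ⟨h, _⟩
      · exact h
      · linarith
    · have h8 : K * ((1 + a) * (a ^ 2 * t ^ 2 - 1 + (2 * K + c + 2) * t * (1 - a ^ 2)))
          < d * ((1 + a) * (a ^ 2 * t ^ 2 - 1 + (2 * K + c + 2) * t * (1 - a ^ 2))) :=
        mul_lt_mul_of_neg_right hdK hE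
      have h7 : 0 < A1 * (A2 * d ^ 2 + B2 * d + C2) := by
        rw [key0, hroot]
        linarith only [mul_lt_mul_of_pos_left h8 ha0, mul_pos ha0 hF]
      rcases mul_pos_iff.mp h7 with ⟨_, h⟩ | ⟨h, _⟩
      · exact h
      · linarith
  have hvx : 2 * A2 * d + B2 < 0 := by
    have hvK : 2 * A2 * K + B2 < 0 := by
      rw [hA2, hB2]
      linarith only [mul_pos (mul_pos ht0 (pow_pos ha0 3)) hK0,
        mul_pos (show (0:ℝ) < K + c + 2 by linarith) (mul_pos ht0 (pow_pos ha0 3)),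
        mul_pos (show (0:ℝ) < K + 1 by linarith) (mul_pos ht0 (pow_pos ha0 2)),
        mul_nonneg (show (0:ℝ) ≤ 1 - a by linarith) (show (0:ℝ) ≤ K - 1 by linarith), hc]
    linarith only [hvK, mul_pos hA2p (sub_pos.mpr hdK)]
  have hs2lt : s2 < -(2 * A2 * d + B2) := by
    have hy : 0 < -(2 * A2 * d + B2) := by linarith
    have he : (-(2 * A2 * d + B2)) ^ 2 - (B2 ^ 2 - 4 * A2 * C2)
        = 4 * A2 * (A2 * d ^ 2 + B2 * d + C2) := by ring
    have hsq : s2 ^ 2 < (-(2 * A2 * d + B2)) ^ 2 := by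
      linarith only [mul_pos hA2p hq2, he, hs2]
    exact lt_of_pow_lt_pow_left₀ 2 hy.le hsq
  have hrepr : 2 * C2 / (-B2 + s2) = (-B2 - s2) / (2 * A2) := by
    rw [div_eq_div_iff hden2.ne' (ne_of_gt (by linarith : (0:ℝ) < 2 * A2))]
    linear_combination hs2
  rw [hrepr, lt_div_iff₀ (by linarith : (0:ℝ) < 2 * A2)]
  linarith only [hs2lt]

/-- For `n ≥ 3` and `a ∈ (0,1)`, the sequence
`δ_k^{(1)} = 2·C_k/(−B_k + √(B_k² − 4·A_k·C_k))`, where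
`A_k = a − a^{2k+n−1}`, `B_k = −((k+n−2)·a^{2k+n−1} + k·a^{2k+n−2} + k·a + (k+n−2))`,
`C_k = (k+n−2)·k·(1 − a^{2k+n−2})`, is strictly increasing for `k ≥ 1`. -/
theorem stmt_17 (n : ℕ) (hn : 3 ≤ n) (a : ℝ) (ha : a ∈ Set.Ioo (0:ℝ) 1) :
    StrictMonoOn (fun k : ℕ =>
      (2 * (((k : ℝ) + n - 2) * k * (1 - a ^ (2 * k + n - 2)))) /
        (-(-(((k : ℝ) + n - 2) * a ^ (2 * k + n - 1) + k * a ^ (2 * k + n - 2)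
              + k * a + ((k : ℝ) + n - 2)))
          + Real.sqrt
            ((-(((k : ℝ) + n - 2) * a ^ (2 * k + n - 1) + k * a ^ (2 * k + n - 2)
                + k * a + ((k : ℝ) + n - 2))) ^ 2
              - 4 * (a - a ^ (2 * k + n - 1)) *
                (((k : ℝ) + n - 2) * k * (1 - a ^ (2 * k + n - 2))))))
      (Set.Ici 1) := by
  obtain ⟨ha0, ha1⟩ := ha
  obtain ⟨ν, rfl⟩ : ∃ ν, n = ν + 3 := ⟨n - 3, by omega⟩
  have key : ∀ k : ℕ, 1 ≤ k →
      (fun k : ℕ =>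
      (2 * (((k : ℝ) + (ν + 3 : ℕ) - 2) * k * (1 - a ^ (2 * k + (ν + 3) - 2)))) /
        (-(-(((k : ℝ) + (ν + 3 : ℕ) - 2) * a ^ (2 * k + (ν + 3) - 1)
              + k * a ^ (2 * k + (ν + 3) - 2)
              + k * a + ((k : ℝ) + (ν + 3 : ℕ) - 2)))
          + Real.sqrt
            ((-(((k : ℝ) + (ν + 3 : ℕ) - 2) * a ^ (2 * k + (ν + 3) - 1)
                + k * a ^ (2 * k + (ν + 3) - 2)
                + k * a + ((k : ℝ) + (ν + 3 : ℕ) - 2))) ^ 2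
              - 4 * (a - a ^ (2 * k + (ν + 3) - 1)) *
                (((k : ℝ) + (ν + 3 : ℕ) - 2) * k * (1 - a ^ (2 * k + (ν + 3) - 2)))))) k
      < (fun k : ℕ =>
      (2 * (((k : ℝ) + (ν + 3 : ℕ) - 2) * k * (1 - a ^ (2 * k + (ν + 3) - 2)))) /
        (-(-(((k : ℝ) + (ν + 3 : ℕ) - 2) * a ^ (2 * k + (ν + 3) - 1)
              + k * a ^ (2 * k + (ν + 3) - 2)
              + k * a + ((k : ℝ) + (ν + 3 : ℕ) - 2)))
          + Real.sqrt
            ((-(((k : ℝ) + (ν + 3 : ℕ) - 2) * a ^ (2 * k + (ν + 3) - 1)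
                + k * a ^ (2 * k + (ν + 3) - 2)
                + k * a + ((k : ℝ) + (ν + 3 : ℕ) - 2))) ^ 2
              - 4 * (a - a ^ (2 * k + (ν + 3) - 1)) *
                (((k : ℝ) + (ν + 3 : ℕ) - 2) * k * (1 - a ^ (2 * k + (ν + 3) - 2)))))) (k + 1) := by
    intro k hk
    simp only []
    have hLb := L_bound17 a ha0 ha1 (2 * k + ν + 1)
    rw [pow_succ a (2 * k + ν + 1)] at hLb
    push_cast at hLb
    refine core17 a (k : ℝ) (ν : ℝ) (a ^ (2 * k + ν + 1)) _ _ _ _ _ _ ha0 ha1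
      (by exact_mod_cast hk) (Nat.cast_nonneg ν) (pow_pos ha0 _)
      (pow_lt_one₀ ha0.le ha1 (by omega)) (by linarith only [hLb]) ?_ ?_ ?_ ?_ ?_ ?_
    · rw [show 2 * k + (ν + 3) - 1 = 2 * k + ν + 2 from by omega]
      ring
    · simp only [show 2 * k + (ν + 3) - 1 = 2 * k + ν + 2 from by omega,
        show 2 * k + (ν + 3) - 2 = 2 * k + ν + 1 from by omega]
      push_cast
      ring
    · simp only [show 2 * k + (ν + 3) - 2 = 2 * k + ν + 1 from by omega]
      push_cast
      ring
    · rw [show 2 * (k + 1) + (ν + 3) - 1 = 2 * k + ν + 4 from by omega]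
      ring
    · simp only [show 2 * (k + 1) + (ν + 3) - 1 = 2 * k + ν + 4 from by omega,
        show 2 * (k + 1) + (ν + 3) - 2 = 2 * k + ν + 3 from by omega]
      push_cast
      ring
    · simp only [show 2 * (k + 1) + (ν + 3) - 2 = 2 * k + ν + 3 from by omega]
      push_cast
      ring
  intro x hx y hy hxy
  simp only [Set.mem_Ici] at hx hy
  clear hy
  induction y with
  | zero => omega
  | succ q ih =>
    rcases Nat.lt_succ_iff_lt_or_eq.mp hxy with h' | h'
    · exact (ih h').trans (key q (by omega))
    · subst h'; exact key x hx
end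

section
/- Let n ≥ 3 be an integer and a ∈ (0,1). The function h_{a,n} : [1,∞) → ℝ defined by h_{a,n}(t) = √((t+n−2)/t)·(a^{2t+n−1} + 1) + a·√(t/(t+n−2))·(a^{2t+n−3} + 1) is strictly decreasing on [1,∞). -/
open Real

set_option maxHeartbeats 1000000 in
/-- For `n ≥ 3` and `a ∈ (0,1)`, the function
`h_{a,n}(t) = √((t+n−2)/t)·(a^{2t+n−1} + 1) + a·√(t/(t+n−2))·(a^{2t+n−3} + 1)`
is strictly decreasing on `[1,∞)`. -/
theorem stmt_18 (n : ℕ) (hn : 3 ≤ n) (a : ℝ) (ha : a ∈ Set.Ioo (0:ℝ) 1) :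
    StrictAntiOn (fun t : ℝ =>
      Real.sqrt ((t + n - 2) / t) * (a ^ (2 * t + (n : ℝ) - 1) + 1) +
        a * Real.sqrt (t / (t + n - 2)) * (a ^ (2 * t + (n : ℝ) - 3) + 1))
      (Set.Ici (1:ℝ)) := by
  obtain ⟨ha0, ha1⟩ := ha
  have hL : Real.log a < 0 := Real.log_neg ha0 ha1
  have hc : (1:ℝ) ≤ (n:ℝ) - 2 := by
    have : (3:ℝ) ≤ (n:ℝ) := by exact_mod_cast hn
    linarith
  have key : ∀ x : ℝ, 1 ≤ x → HasDerivAt (fun t : ℝ =>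
      Real.sqrt ((t + n - 2) / t) * (a ^ (2 * t + (n : ℝ) - 1) + 1) +
        a * Real.sqrt (t / (t + n - 2)) * (a ^ (2 * t + (n : ℝ) - 3) + 1))
      (((1 * x - (x + n - 2) * 1) / x ^ 2 / (2 * Real.sqrt ((x + n - 2) / x))) *
          (a ^ (2 * x + (n : ℝ) - 1) + 1) +
        Real.sqrt ((x + n - 2) / x) * (a ^ (2 * x + (n : ℝ) - 1) * Real.log a * (2 * 1)) +
        (a * ((1 * (x + n - 2) - x * 1) / (x + n - 2) ^ 2 / (2 * Real.sqrt (x / (x + n - 2))))) *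
          (a ^ (2 * x + (n : ℝ) - 3) + 1) +
          a * Real.sqrt (x / (x + n - 2)) * (a ^ (2 * x + (n : ℝ) - 3) * Real.log a * (2 * 1))) x := by
    intro x hx
    have hx0 : (0:ℝ) < x := by linarith
    have hxc : (0:ℝ) < x + n - 2 := by linarith
    have hP : HasDerivAt (fun t : ℝ => (t + n - 2) / t)
        ((1 * x - (x + n - 2) * 1) / x ^ 2) x :=
      (((hasDerivAt_id x).add_const (n:ℝ)).sub_const 2).div (hasDerivAt_id x) hx0.ne'
    have hPne : (x + n - 2) / x ≠ 0 := by positivity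
    have hS : HasDerivAt (fun t : ℝ => Real.sqrt ((t + n - 2) / t))
        ((1 * x - (x + n - 2) * 1) / x ^ 2 / (2 * Real.sqrt ((x + n - 2) / x))) x :=
      hP.sqrt hPne
    have hQ : HasDerivAt (fun t : ℝ => t / (t + n - 2))
        ((1 * (x + n - 2) - x * 1) / (x + n - 2) ^ 2) x :=
      (hasDerivAt_id x).div (((hasDerivAt_id x).add_const (n:ℝ)).sub_const 2) hxc.ne'
    have hQne : x / (x + n - 2) ≠ 0 := by positivity
    have hT : HasDerivAt (fun t : ℝ => Real.sqrt (t / (t + n - 2)))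
        ((1 * (x + n - 2) - x * 1) / (x + n - 2) ^ 2 / (2 * Real.sqrt (x / (x + n - 2)))) x :=
      hQ.sqrt hQne
    have he1 : HasDerivAt (fun t : ℝ => 2 * t + (n:ℝ) - 1) (2 * 1) x :=
      (((hasDerivAt_id x).const_mul 2).add_const (n:ℝ)).sub_const 1
    have he2 : HasDerivAt (fun t : ℝ => 2 * t + (n:ℝ) - 3) (2 * 1) x :=
      (((hasDerivAt_id x).const_mul 2).add_const (n:ℝ)).sub_const 3
    have hA1 : HasDerivAt (fun t : ℝ => a ^ (2 * t + (n:ℝ) - 1))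
        (a ^ (2 * x + (n:ℝ) - 1) * Real.log a * (2 * 1)) x :=
      (Real.hasStrictDerivAt_const_rpow ha0 (2 * x + (n:ℝ) - 1)).hasDerivAt.comp x he1
    have hA2 : HasDerivAt (fun t : ℝ => a ^ (2 * t + (n:ℝ) - 3))
        (a ^ (2 * x + (n:ℝ) - 3) * Real.log a * (2 * 1)) x :=
      (Real.hasStrictDerivAt_const_rpow ha0 (2 * x + (n:ℝ) - 3)).hasDerivAt.comp x he2
    have := (hS.mul (hA1.add_const 1)).add (((hT.const_mul a).mul (hA2.add_const 1)))
    exact this.congr_deriv (by ring)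
  refine strictAntiOn_of_deriv_neg (convex_Ici 1)
    (fun x hx => (key x hx).continuousAt.continuousWithinAt) ?_
  intro x hx
  rw [interior_Ici] at hx
  have hx1 : (1:ℝ) ≤ x := hx.le
  rw [(key x hx1).deriv]
  have hx0 : (0:ℝ) < x := by linarith
  have hxc : (0:ℝ) < x + n - 2 := by linarith
  have hTS : Real.sqrt (x / (x + ↑n - 2)) = 1 / Real.sqrt ((x + ↑n - 2) / x) := by
    rw [one_div, ← Real.sqrt_inv, inv_div]
  rw [hTS]
  set S := Real.sqrt ((x + ↑n - 2) / x) with hSdef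
  set A1 := a ^ (2 * x + (n:ℝ) - 1) with hA1def
  set A2 := a ^ (2 * x + (n:ℝ) - 3) with hA2def
  set L := Real.log a with hLdef
  have hSpos : 0 < S := Real.sqrt_pos.2 (by positivity)
  have hS2 : S ^ 2 * x = x + ↑n - 2 := by
    rw [hSdef, Real.sq_sqrt (by positivity : (0:ℝ) ≤ (x + ↑n - 2)/x)]
    field_simp
  have hA2pos : 0 < A2 := Real.rpow_pos_of_pos ha0 _
  have hA1pos : 0 < A1 := Real.rpow_pos_of_pos ha0 _
  have hA2le1 : A2 ≤ 1 :=
    Real.rpow_le_one ha0.le ha1.le (by linarith : (0:ℝ) ≤ 2 * x + ↑n - 3)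
  have hA1A2 : A1 = A2 * a ^ 2 := by
    rw [hA1def, hA2def, ← Real.rpow_natCast a 2, ← Real.rpow_add ha0]
    congr 1
    push_cast
    ring
  have hkey : a * x * (A2 + 1) ≤ (A1 + 1) * (x + ↑n - 2) := by
    have haA2 : a * A2 ≤ 1 := by nlinarith
    have h1 : a * (A2 + 1) ≤ A1 + 1 := by
      rw [hA1A2]
      nlinarith [mul_nonneg (sub_nonneg.2 ha1.le) (sub_nonneg.2 haA2)]
    nlinarith [mul_le_mul_of_nonneg_left h1 hx0.le]
  have hE : ((1 * x - (x + ↑n - 2) * 1) / x ^ 2 / (2 * S) * (A1 + 1) + S * (A1 * L * (2 * 1)) +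
        a * ((1 * (x + ↑n - 2) - x * 1) / (x + ↑n - 2) ^ 2 / (2 * (1 / S))) * (A2 + 1) +
      a * (1 / S) * (A2 * L * (2 * 1))) * (2 * S * x ^ 2 * (x + ↑n - 2) ^ 2)
      = -(↑n - 2) * (A1 + 1) * (x + ↑n - 2) ^ 2 + 4 * A1 * L * (S ^ 2 * x) * x * (x + ↑n - 2) ^ 2
        + a * (↑n - 2) * (A2 + 1) * (S ^ 2 * x) * x + 4 * a * A2 * L * x ^ 2 * (x + ↑n - 2) ^ 2 := by
    have hS' : S ≠ 0 := hSpos.ne'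
    field_simp
    ring
  rw [hS2] at hE
  have hN : -(↑n - 2) * (A1 + 1) * (x + ↑n - 2) ^ 2 + 4 * A1 * L * (x + ↑n - 2) * x * (x + ↑n - 2) ^ 2
        + a * (↑n - 2) * (A2 + 1) * (x + ↑n - 2) * x + 4 * a * A2 * L * x ^ 2 * (x + ↑n - 2) ^ 2 < 0 := by
    have p1 : 4 * A1 * L * (x + ↑n - 2) * x * (x + ↑n - 2) ^ 2 < 0 := by
      have : 0 < 4 * A1 * ((x + ↑n - 2) * x * (x + ↑n - 2) ^ 2) := by positivity
      nlinarith
    have p2 : 4 * a * A2 * L * x ^ 2 * (x + ↑n - 2) ^ 2 < 0 := by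
      have : 0 < 4 * a * A2 * (x ^ 2 * (x + ↑n - 2) ^ 2) := by positivity
      nlinarith
    have p3 : -(↑n - 2) * (A1 + 1) * (x + ↑n - 2) ^ 2 + a * (↑n - 2) * (A2 + 1) * (x + ↑n - 2) * x ≤ 0 := by
      nlinarith [mul_le_mul_of_nonneg_left hkey (mul_nonneg (by linarith : (0:ℝ) ≤ ↑n - 2) hxc.le)]
    linarith
  have hpos : 0 < 2 * S * x ^ 2 * (x + ↑n - 2) ^ 2 := by positivity
  by_contra hcon
  push_neg at hcon
  have h0 := mul_nonneg hcon hpos.le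
  rw [hE] at h0
  linarith
end

section
/- Let n ≥ 3 be an integer, t ≥ 1 a real number, and a ∈ (0,1). Then g_{t,n}(a) := ((n+t−2)/t)·a^{n+2t−1} − a^{n+2t−3} + (n−2)/t > 0. More precisely, g_{t,n} attains its minimum on (0,1) at a_{t,n} = √( (t/(n+t−2))·((n+2t−3)/(n+2t−1)) ), and g_{t,n}(a_{t,n}) ≥ −1/(t + (n−1)/2) + (n−2)/t > 0. -/
open Real

/-- For integer `n ≥ 3`, real `t ≥ 1` and `a ∈ (0,1)`, the quantity
`g_{t,n}(a) = ((n+t−2)/t)·a^{n+2t−1} − a^{n+2t−3} + (n−2)/t` is positive; more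
precisely, `g_{t,n}` attains its minimum on `(0,1)` at
`a_{t,n} = √((t/(n+t−2))·((n+2t−3)/(n+2t−1)))`, and
`g_{t,n}(a_{t,n}) ≥ −1/(t + (n−1)/2) + (n−2)/t > 0`. -/
theorem stmt_19 (n : ℕ) (hn : 3 ≤ n) (t : ℝ) (ht : 1 ≤ t) (a : ℝ)
    (ha : a ∈ Set.Ioo (0:ℝ) 1) :
    0 < ((n : ℝ) + t - 2) / t * a ^ ((n : ℝ) + 2 * t - 1)
        - a ^ ((n : ℝ) + 2 * t - 3) + ((n : ℝ) - 2) / t ∧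
    (∀ b ∈ Set.Ioo (0:ℝ) 1,
      ((n : ℝ) + t - 2) / t *
          Real.sqrt ((t / ((n : ℝ) + t - 2)) * (((n : ℝ) + 2 * t - 3) / ((n : ℝ) + 2 * t - 1)))
            ^ ((n : ℝ) + 2 * t - 1)
        - Real.sqrt ((t / ((n : ℝ) + t - 2)) * (((n : ℝ) + 2 * t - 3) / ((n : ℝ) + 2 * t - 1)))
            ^ ((n : ℝ) + 2 * t - 3)
        + ((n : ℝ) - 2) / t
      ≤ ((n : ℝ) + t - 2) / t * b ^ ((n : ℝ) + 2 * t - 1)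
          - b ^ ((n : ℝ) + 2 * t - 3) + ((n : ℝ) - 2) / t) ∧
    (-1 / (t + ((n : ℝ) - 1) / 2) + ((n : ℝ) - 2) / t
      ≤ ((n : ℝ) + t - 2) / t *
          Real.sqrt ((t / ((n : ℝ) + t - 2)) * (((n : ℝ) + 2 * t - 3) / ((n : ℝ) + 2 * t - 1)))
            ^ ((n : ℝ) + 2 * t - 1)
        - Real.sqrt ((t / ((n : ℝ) + t - 2)) * (((n : ℝ) + 2 * t - 3) / ((n : ℝ) + 2 * t - 1)))
            ^ ((n : ℝ) + 2 * t - 3)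
        + ((n : ℝ) - 2) / t) ∧
    0 < -1 / (t + ((n : ℝ) - 1) / 2) + ((n : ℝ) - 2) / t := by
  obtain ⟨ha0, ha1⟩ := ha
  have ht0 : (0:ℝ) < t := lt_of_lt_of_le one_pos ht
  have hN : (3:ℝ) ≤ (n:ℝ) := by exact_mod_cast hn
  set N := (n:ℝ) with hNdef
  set c := (N + t - 2)/t with hcdef
  set p := N + 2*t - 1 with hpdef
  set q := N + 2*t - 3 with hqdef
  set s := t / (N + t - 2) * (q / p) with hsdef
  have hq : (0:ℝ) < q := by simp only [hqdef]; linarith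
  have hp : (0:ℝ) < p := by simp only [hpdef]; linarith
  have hden : (0:ℝ) < N + t - 2 := by linarith
  have hc : 0 < c := div_pos hden ht0
  have hc1 : 1 ≤ c := (one_le_div ht0).2 (by linarith)
  have hpq : p = q + 2 := by simp only [hpdef, hqdef]; ring
  have hs_eq : s = q / (c * p) := by
    rw [hsdef, hcdef]
    field_simp
  have hs0 : 0 < s := by rw [hs_eq]; positivity
  have hs1 : s ≤ 1 := by
    rw [hs_eq]
    apply div_le_one_of_le₀ _ (by positivity)
    calc q ≤ p := by linarith
    _ = 1 * p := (one_mul p).symm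
    _ ≤ c * p := by gcongr
  set A := Real.sqrt s with hAdef
  have hA0 : 0 < A := Real.sqrt_pos.2 hs0
  have hA1 : A ≤ 1 := Real.sqrt_le_one.2 hs1
  have hAq : A ^ q = s ^ (q/2) := by
    rw [hAdef, Real.sqrt_eq_rpow, ← Real.rpow_mul hs0.le,
        show 1/2*q = q/2 by ring]
  have hA2 : A ^ (2:ℝ) = s := by
    rw [hAdef, Real.rpow_two, Real.sq_sqrt hs0.le]
  have hcs : c * s = q / p := by
    rw [hs_eq]; field_simp
  -- value at the minimizer
  have hval : c * A ^ p - A ^ q = -(2/p) * A ^ q := by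
    rw [hpq, Real.rpow_add hA0, hA2]
    have : c * (A ^ q * s) = (q/p) * A ^ q := by
      rw [← hcs]; ring
    rw [this]
    field_simp
    ring_nf
    rw [hpq]; ring
  -- key AM-GM inequality
  have key : ∀ b : ℝ, 0 < b → c * A ^ p - A ^ q ≤ c * b ^ p - b ^ q := by
    intro b hb
    have hw : q/p + 2/p = 1 := by field_simp; linarith
    have hgm := Real.geom_mean_le_arith_mean2_weighted
      (w₁ := q/p) (w₂ := 2/p) (p₁ := c*p/q * b ^ p) (p₂ := A ^ q)
      (div_nonneg hq.le hp.le) (div_nonneg (by norm_num) hp.le)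
      (mul_nonneg (by positivity) (Real.rpow_nonneg hb.le p))
      (Real.rpow_nonneg hA0.le q) hw
    have h1 : ((c*p/q) * b ^ p) ^ (q/p) * (A ^ q) ^ (2/p) = b ^ q := by
      rw [Real.mul_rpow (by positivity) (Real.rpow_nonneg hb.le p),
          ← Real.rpow_mul hb.le, hAq, ← Real.rpow_mul hs0.le,
          show p * (q/p) = q by field_simp,
          show q/2 * (2/p) = q/p by field_simp,
          mul_comm ((c*p/q) ^ (q/p)) (b ^ q), mul_assoc,
          ← Real.mul_rpow (by positivity) hs0.le,
          show c*p/q * s = 1 by rw [hs_eq]; field_simp,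
          Real.one_rpow, mul_one]
    have h2 : q/p * ((c*p/q) * b ^ p) + 2/p * A ^ q = c * b ^ p + 2/p * A ^ q := by
      rw [show q/p * ((c*p/q) * b ^ p) = c * b ^ p by field_simp]
    rw [h1, h2] at hgm
    rw [hval]
    linarith
  -- auxiliary numeric facts
  have hAq1 : A ^ q ≤ 1 := Real.rpow_le_one hA0.le hA1 hq.le
  have hAqpos : 0 < A ^ q := Real.rpow_pos_of_pos hA0 q
  have hhalf : t + (N - 1)/2 = p / 2 := by rw [hpdef]; ring
  have hneg : -1 / (t + (N - 1)/2) = -(2/p) := by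
    rw [hhalf]; field_simp
  have hpos : 0 < -(2/p) + (N - 2)/t := by
    rw [neg_add_eq_sub, sub_pos, div_lt_div_iff₀ hp ht0]
    nlinarith
  have h4 : -(2/p) ≤ -(2/p) * A ^ q := by
    have := mul_le_mul_of_nonneg_left hAq1 (le_of_lt (by positivity : (0:ℝ) < 2/p))
    linarith
  refine ⟨?_, ?_, ?_, ?_⟩
  · have h3 := key a ha0
    linarith [hval]
  · intro b hb
    have := key b hb.1
    linarith
  · rw [hneg]
    linarith [hval, key A hA0]
  · rw [hneg]
    linarith
end
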